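/- arXiv:0908.1956 — 3 statements merged into one kernel-verified Lean document; each statement's English description precedes it below -/
import Mathlib

section
/- Product formula for total Laplacian spectra of cubical complexes: Let X ⊆ Q_m and Y ⊆ Q_n be proper cubical complexes, and let Z = X × Y := {f ⌢ g ∈ Q_{m+n} : f ∈ X, g ∈ Y} (concatenation of tuples), which is a proper cubical complex in Q_{m+n}. Then for every k ≥ 0, the multiset s^tot_k(Z) equals the multiset sum, over all pairs (i, j) of nonnegative integers with i + j = k, of the multisets {λ + μ : λ ∈ s^tot_i(X), μ ∈ s^tot_j(Y)} (each pair (λ, μ) counted with multiplicity). -/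
open BigOperators Matrix

namespace CubicalPaper

/-- Faces of the `n`-cube `Q_n`: tuples in `{0, 1, ✱}ⁿ`, with `2 : Fin 3` playing the
role of `✱`. -/
abbrev Face (n : ℕ) : Type := Fin n → Fin 3

/-- The direction set of a face: the coordinates equal to `✱`. -/
def dir {n : ℕ} (f : Face n) : Finset (Fin n) := Finset.univ.filter fun i => f i = 2

/-- The dimension of a face. -/
def fdim {n : ℕ} (f : Face n) : ℕ := (dir f).card

/-- The partial order on `Q_n`: `f ≤ g` iff `f i = g i` whenever `g i ≠ ✱`. -/
def cubeLE {n : ℕ} (f g : Face n) : Prop := ∀ i, g i ≠ 2 → f i = g i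

/-- A proper cubical complex: a downward-closed set of faces of `Q_n`. -/
def IsComplex {n : ℕ} (X : Finset (Face n)) : Prop :=
  ∀ g ∈ X, ∀ f, cubeLE f g → f ∈ X

/-- The incidence sign `ε(f, g)`: if `dir g = {a_1 < ⋯ < a_i}` and `f` is obtained from
`g` by changing the entry `g (a_j) = ✱` to `0` (resp. `1`), then `ε(f,g) = (-1)^j`
(resp. `(-1)^(j+1)`); in all other cases `ε(f,g) = 0`. -/
def eps {n : ℕ} (f g : Face n) : ℤ :=
  ∑ a : Fin n,
    if g a = 2 ∧ f a ≠ 2 ∧ ∀ b, b ≠ a → f b = g b then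
      (-1 : ℤ) ^ ((Finset.univ.filter fun b => g b = 2 ∧ b ≤ a).card +
        if f a = 1 then 1 else 0)
    else 0

/-- The `k`-dimensional faces of `X`. -/
def faceSet {n : ℕ} (X : Finset (Face n)) (k : ℕ) : Finset (Face n) :=
  X.filter fun f => fdim f = k

/-- The real cubical boundary matrix `∂_{k+1}` of `X`, with rows indexed by `X_k`
and columns by `X_{k+1}`, entries `ε(f, g)`. -/
def bdryM {n : ℕ} (X : Finset (Face n)) (k : ℕ) :
    Matrix {f // f ∈ faceSet X k} {g // g ∈ faceSet X (k + 1)} ℝ :=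
  Matrix.of fun f g => (eps f.1 g.1 : ℝ)

/-- The up-down Laplacian `L^ud_k = ∂_{k+1} ∂_{k+1}^T`. -/
noncomputable def Lud {n : ℕ} (X : Finset (Face n)) (k : ℕ) :
    Matrix {f // f ∈ faceSet X k} {f // f ∈ faceSet X k} ℝ :=
  bdryM X k * (bdryM X k)ᵀ

/-- The down-up Laplacian `L^du_k = ∂_k^T ∂_k` (with `∂_0 = 0`). -/
noncomputable def Ldu {n : ℕ} (X : Finset (Face n)) :
    (k : ℕ) → Matrix {f // f ∈ faceSet X k} {f // f ∈ faceSet X k} ℝ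
  | 0 => 0
  | (j + 1) => (bdryM X j)ᵀ * bdryM X j

/-- The total Laplacian `L^tot_k = L^ud_k + L^du_k`. -/
noncomputable def Ltot {n : ℕ} (X : Finset (Face n)) (k : ℕ) :
    Matrix {f // f ∈ faceSet X k} {f // f ∈ faceSet X k} ℝ :=
  Lud X k + Ldu X k

/-- The spectrum `s^tot_k(X)` of `L^tot_k`: the multiset of roots of its characteristic
polynomial (all of which are real, `L^tot_k` being real symmetric). -/
noncomputable def stot {n : ℕ} (X : Finset (Face n)) (k : ℕ) : Multiset ℝ :=
  (Ltot X k).charpoly.roots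

/-- The spectrum `s^ud_k(X)` of `L^ud_k`. -/
noncomputable def sud {n : ℕ} (X : Finset (Face n)) (k : ℕ) : Multiset ℝ :=
  (Lud X k).charpoly.roots

/-- The product `X × Y ⊆ Q_{m+n}` of cubical complexes, via concatenation of tuples. -/
def cprod {m n : ℕ} (X : Finset (Face m)) (Y : Finset (Face n)) :
    Finset (Face (m + n)) :=
  (X ×ˢ Y).image fun p => Fin.append p.1 p.2



section Aux
variable {m n : ℕ}

lemma castAdd_ne_natAdd (a : Fin m) (b : Fin n) :
    (Fin.castAdd n a : Fin (m + n)) ≠ Fin.natAdd m b := by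
  have := a.isLt
  simp only [Fin.ne_iff_vne, Fin.coe_castAdd, Fin.coe_natAdd]
  omega

lemma cond_left (f f' : Face m) (g g' : Face n) (a : Fin m) :
    (∀ b, b ≠ Fin.castAdd n a → Fin.append f g b = Fin.append f' g' b) ↔
      ((∀ b, b ≠ a → f b = f' b) ∧ g = g') := by
  constructor
  · intro H
    refine ⟨fun b hb => ?_, funext fun b => ?_⟩
    · have := H (Fin.castAdd n b) (by
        simpa [Fin.ne_iff_vne, Fin.coe_castAdd] using (Fin.ne_iff_vne ..).1 hb)
      simpa [Fin.append_left] using this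
    · have := H (Fin.natAdd m b) (Ne.symm (castAdd_ne_natAdd a b))
      simpa [Fin.append_right] using this
  · rintro ⟨H1, rfl⟩ b hb
    revert hb
    refine Fin.addCases (motive := fun b => b ≠ Fin.castAdd n a →
      Fin.append f g b = Fin.append f' g b) (fun c => ?_) (fun c => ?_) b <;> intro hc
    · rw [Fin.append_left, Fin.append_left]
      apply H1
      rintro rfl; exact hc rfl
    · rw [Fin.append_right, Fin.append_right]

lemma count_left (f' : Face m) (g' : Face n) (a : Fin m) :
    (Finset.univ.filter fun b => Fin.append f' g' b = 2 ∧ b ≤ Fin.castAdd n a).card =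
      (Finset.univ.filter fun b => f' b = 2 ∧ b ≤ a).card := by
  rw [Finset.card_filter, Finset.card_filter, Fin.sum_univ_add]
  have h2 : ∀ b : Fin n, ¬ (Fin.natAdd m b ≤ Fin.castAdd n a) := by
    intro b
    have := a.isLt
    simp only [Fin.le_def, Fin.coe_natAdd, Fin.coe_castAdd]
    omega
  have h1 : ∀ b : Fin m, (Fin.castAdd n b ≤ Fin.castAdd n a) ↔ b ≤ a := fun b => Iff.rfl
  rw [show (∑ b : Fin n, if Fin.append f' g' (Fin.natAdd m b) = 2 ∧
      Fin.natAdd m b ≤ Fin.castAdd n a then 1 else 0) = 0 from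
    Finset.sum_eq_zero fun b _ => by simp [h2 b], add_zero]
  apply Finset.sum_congr rfl
  intro b _
  rw [Fin.append_left]
  simp [h1 b]

lemma count_right (f' : Face m) (g' : Face n) (a : Fin n) :
    (Finset.univ.filter fun b => Fin.append f' g' b = 2 ∧ b ≤ Fin.natAdd m a).card =
      fdim f' + (Finset.univ.filter fun b => g' b = 2 ∧ b ≤ a).card := by
  rw [Finset.card_filter, Finset.card_filter, Fin.sum_univ_add]
  have h1 : ∀ b : Fin m, (Fin.castAdd n b ≤ Fin.natAdd m a) := by
    intro b
    have := b.isLt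
    simp only [Fin.le_def, Fin.coe_natAdd, Fin.coe_castAdd]
    omega
  have h2 : ∀ b : Fin n, (Fin.natAdd m b ≤ Fin.natAdd m a) ↔ b ≤ a := by
    intro b
    simp only [Fin.le_def, Fin.coe_natAdd]
    omega
  have hF : fdim f' = ∑ b : Fin m, if f' b = 2 then 1 else 0 := by
    rw [fdim, dir, Finset.card_filter]
  rw [hF]
  congr 1
  · apply Finset.sum_congr rfl
    intro b _
    rw [Fin.append_left]
    simp [h1 b]
  · apply Finset.sum_congr rfl
    intro b _
    rw [Fin.append_right]
    simp [h2 b]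

lemma cond_right (f f' : Face m) (g g' : Face n) (a : Fin n) :
    (∀ b, b ≠ Fin.natAdd m a → Fin.append f g b = Fin.append f' g' b) ↔
      (f = f' ∧ ∀ b, b ≠ a → g b = g' b) := by
  constructor
  · intro H
    refine ⟨funext fun b => ?_, fun b hb => ?_⟩
    · have := H (Fin.castAdd n b) (castAdd_ne_natAdd b a)
      simpa [Fin.append_left] using this
    · have := H (Fin.natAdd m b) (by
        simpa [Fin.ne_iff_vne, Fin.coe_natAdd] using (Fin.ne_iff_vne ..).1 hb)
      simpa [Fin.append_right] using this
  · rintro ⟨rfl, H2⟩ b hb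
    revert hb
    refine Fin.addCases (motive := fun b => b ≠ Fin.natAdd m a →
      Fin.append f g b = Fin.append f g' b) (fun c => ?_) (fun c => ?_) b <;> intro hc
    · rw [Fin.append_left, Fin.append_left]
    · rw [Fin.append_right, Fin.append_right]
      apply H2
      rintro rfl; exact hc rfl

lemma eps_append (f f' : Face m) (g g' : Face n) :
    eps (Fin.append f g) (Fin.append f' g') =
      (if g = g' then eps f f' else 0) +
        (if f = f' then (-1) ^ (fdim f') * eps g g' else 0) := by
  unfold eps
  rw [Fin.sum_univ_add]
  congr 1
  · -- left block
    by_cases hg : g = g'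
    · subst hg
      simp only [if_pos rfl]
      apply Finset.sum_congr rfl
      intro a _
      rw [Fin.append_left, Fin.append_left, count_left]
      congr 1
      · rw [eq_iff_iff]
        constructor
        · rintro ⟨h1, h2, h3⟩
          exact ⟨h1, h2, ((cond_left f f' g g a).1 h3).1⟩
        · rintro ⟨h1, h2, h3⟩
          exact ⟨h1, h2, (cond_left f f' g g a).2 ⟨h3, rfl⟩⟩
    · simp only [if_neg hg]
      apply Finset.sum_eq_zero
      intro a _
      rw [if_neg]
      rintro ⟨-, -, h3⟩
      exact hg ((cond_left f f' g g' a).1 h3).2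
  · -- right block
    by_cases hf : f = f'
    · subst hf
      simp only [if_pos rfl, Finset.mul_sum]
      apply Finset.sum_congr rfl
      intro a _
      rw [Fin.append_right, Fin.append_right, count_right]
      by_cases hc : g' a = 2 ∧ g a ≠ 2 ∧ ∀ b, b ≠ a → g b = g' b
      · have hc' : g' a = 2 ∧ g a ≠ 2 ∧ ∀ b, b ≠ Fin.natAdd m a →
            Fin.append f g b = Fin.append f g' b :=
          ⟨hc.1, hc.2.1, (cond_right f f g g' a).2 ⟨rfl, hc.2.2⟩⟩
        rw [if_pos hc', if_pos hc]
        simp [pow_add, mul_assoc]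
      · rw [if_neg, if_neg hc, mul_zero]
        rintro ⟨h1, h2, h3⟩
        exact hc ⟨h1, h2, ((cond_right f f g g' a).1 h3).2⟩
    · simp only [if_neg hf]
      apply Finset.sum_eq_zero
      intro a _
      rw [if_neg]
      rintro ⟨-, -, h3⟩
      exact hf ((cond_right f f' g g' a).1 h3).1

lemma eps_self (f : Face m) : eps f f = 0 := by
  unfold eps
  apply Finset.sum_eq_zero
  intro a _
  simp only [ite_eq_right_iff]
  rintro ⟨h1, h2, -⟩
  exact absurd h1 h2

lemma fdim_append (f : Face m) (g : Face n) :
    fdim (Fin.append f g) = fdim f + fdim g := by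
  unfold fdim dir
  rw [Finset.card_filter, Finset.card_filter, Finset.card_filter, Fin.sum_univ_add]
  simp [Fin.append_left, Fin.append_right]

lemma append_inj {f f' : Face m} {g g' : Face n}
    (h : Fin.append f g = Fin.append f' g') : f = f' ∧ g = g' := by
  constructor
  · funext a
    have := congrFun h (Fin.castAdd n a)
    simpa [Fin.append_left] using this
  · funext b
    have := congrFun h (Fin.natAdd m b)
    simpa [Fin.append_right] using this

lemma eq_append (h : Face (m + n)) :
    h = Fin.append (fun a => h (Fin.castAdd n a)) (fun b => h (Fin.natAdd m b)) := by
  funext i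
  refine Fin.addCases (fun a => ?_) (fun b => ?_) i
  · rw [Fin.append_left]
  · rw [Fin.append_right]


/-- Entry of the up Laplacian, as a function on plain faces. -/
noncomputable def EU (X : Finset (Face m)) (d : ℕ) (f f' : Face m) : ℝ :=
  ∑ h ∈ faceSet X (d + 1), (eps f h : ℝ) * (eps f' h : ℝ)

/-- Entry of the down Laplacian, as a function on plain faces. -/
noncomputable def ED (X : Finset (Face m)) : ℕ → Face m → Face m → ℝ
  | 0 => fun _ _ => 0
  | (j + 1) => fun f f' => ∑ h ∈ faceSet X j, (eps h f : ℝ) * (eps h f' : ℝ)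

noncomputable def ET (X : Finset (Face m)) (d : ℕ) (f f' : Face m) : ℝ :=
  EU X d f f' + ED X d f f'

lemma faceSet_cprod (X : Finset (Face m)) (Y : Finset (Face n)) (d : ℕ) :
    faceSet (cprod X Y) d =
      ((X ×ˢ Y).filter fun p => fdim p.1 + fdim p.2 = d).image
        fun p => Fin.append p.1 p.2 := by
  rw [faceSet, cprod, Finset.filter_image]
  congr 1
  ext p
  simp [fdim_append]

lemma sum_faceSet_cprod (X : Finset (Face m)) (Y : Finset (Face n)) (d : ℕ)
    (F : Face (m + n) → ℝ) :
    ∑ h ∈ faceSet (cprod X Y) d, F h =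
      ∑ p ∈ (X ×ˢ Y).filter (fun p => fdim p.1 + fdim p.2 = d),
        F (Fin.append p.1 p.2) := by
  rw [faceSet_cprod, Finset.sum_image]
  intro p _ q _ h
  obtain ⟨h1, h2⟩ := append_inj h
  exact Prod.ext h1 h2

section quad
variable (X : Finset (Face m)) (Y : Finset (Face n)) (d : ℕ)

lemma quad_LL (u v : Face m → Face n → ℝ) (g₀ g₁ : Face n) (hg₀ : g₀ ∈ Y) :
    (∑ a ∈ X, ∑ b ∈ Y, if fdim a + fdim b = d then
        (if g₀ = b then u a b else 0) * (if g₁ = b then v a b else 0) else 0) =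
      if g₀ = g₁ then
        ∑ a ∈ X, (if fdim a + fdim g₀ = d then u a g₀ * v a g₀ else 0) else 0 := by
  by_cases hg : g₀ = g₁
  · subst hg
    rw [if_pos rfl]
    apply Finset.sum_congr rfl
    intro a _
    rw [← Finset.sum_ite_eq Y g₀ (fun b => if fdim a + fdim b = d then u a b * v a b else 0)
      |>.trans (if_pos hg₀)]
    apply Finset.sum_congr rfl
    intro b _
    by_cases hb : g₀ = b
    · subst hb; simp
    · simp [hb]
  · rw [if_neg hg]
    apply Finset.sum_eq_zero; intro a _
    apply Finset.sum_eq_zero; intro b _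
    by_cases h0 : g₀ = b
    · subst h0; simp [show g₁ ≠ g₀ from fun h => hg h.symm]
    · simp [h0]

lemma quad_RR (w z : Face m → Face n → ℝ) (f₀ f₁ : Face m) (hf₀ : f₀ ∈ X) :
    (∑ a ∈ X, ∑ b ∈ Y, if fdim a + fdim b = d then
        (if f₀ = a then w a b else 0) * (if f₁ = a then z a b else 0) else 0) =
      if f₀ = f₁ then
        ∑ b ∈ Y, (if fdim f₀ + fdim b = d then w f₀ b * z f₀ b else 0) else 0 := by
  by_cases hf : f₀ = f₁
  · subst hf
    rw [if_pos rfl, ← Finset.sum_ite_eq X f₀ (fun a => ∑ b ∈ Y,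
      if fdim a + fdim b = d then w a b * z a b else 0) |>.trans (if_pos hf₀)]
    apply Finset.sum_congr rfl
    intro a _
    by_cases ha : f₀ = a
    · subst ha; simp
    · simp [ha, Finset.sum_eq_zero]
  · rw [if_neg hf]
    apply Finset.sum_eq_zero; intro a _
    apply Finset.sum_eq_zero; intro b _
    by_cases h0 : f₀ = a
    · subst h0; simp [show f₁ ≠ f₀ from fun h => hf h.symm]
    · simp [h0]

lemma quad_LR (u w : Face m → Face n → ℝ) (g₀ : Face n) (f₁ : Face m)
    (hg₀ : g₀ ∈ Y) (hf₁ : f₁ ∈ X) :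
    (∑ a ∈ X, ∑ b ∈ Y, if fdim a + fdim b = d then
        (if g₀ = b then u a b else 0) * (if f₁ = a then w a b else 0) else 0) =
      if fdim f₁ + fdim g₀ = d then u f₁ g₀ * w f₁ g₀ else 0 := by
  rw [← Finset.sum_ite_eq X f₁ (fun a => if fdim a + fdim g₀ = d then u a g₀ * w a g₀ else 0)
    |>.trans (if_pos hf₁)]
  apply Finset.sum_congr rfl
  intro a _
  by_cases ha : f₁ = a
  · subst ha
    rw [if_pos rfl,
      ← Finset.sum_ite_eq Y g₀ (fun b => if fdim f₁ + fdim b = d then u f₁ b * w f₁ b else 0)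
      |>.trans (if_pos hg₀)]
    apply Finset.sum_congr rfl
    intro b _
    by_cases hb : g₀ = b
    · subst hb; simp
    · simp [hb]
  · rw [if_neg ha]
    apply Finset.sum_eq_zero; intro b _
    by_cases hb : g₀ = b
    · subst hb; simp [ha]
    · simp [hb]

lemma quad_RL (w u : Face m → Face n → ℝ) (f₀ : Face m) (g₁ : Face n)
    (hf₀ : f₀ ∈ X) (hg₁ : g₁ ∈ Y) :
    (∑ a ∈ X, ∑ b ∈ Y, if fdim a + fdim b = d then
        (if f₀ = a then w a b else 0) * (if g₁ = b then u a b else 0) else 0) =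
      if fdim f₀ + fdim g₁ = d then w f₀ g₁ * u f₀ g₁ else 0 := by
  calc (∑ a ∈ X, ∑ b ∈ Y, if fdim a + fdim b = d then
        (if f₀ = a then w a b else 0) * (if g₁ = b then u a b else 0) else 0)
      = ∑ a ∈ X, ∑ b ∈ Y, (if fdim a + fdim b = d then
        (if g₁ = b then u a b else 0) * (if f₀ = a then w a b else 0) else 0) := by
        refine Finset.sum_congr rfl fun a _ => Finset.sum_congr rfl fun b _ => ?_
        congr 1; ring
    _ = if fdim f₀ + fdim g₁ = d then u f₀ g₁ * w f₀ g₁ else 0 :=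
        quad_LR X Y d u w g₁ f₀ hg₁ hf₀
    _ = _ := by split <;> ring

end quad

lemma eps_append_real (f f' : Face m) (g g' : Face n) :
    ((eps (Fin.append f g) (Fin.append f' g') : ℤ) : ℝ) =
      (if g = g' then (eps f f' : ℝ) else 0) +
        (if f = f' then (-1) ^ (fdim f') * (eps g g' : ℝ) else 0) := by
  rw [eps_append]
  push_cast
  split_ifs <;> push_cast <;> ring

lemma eps_append_real' (f f' : Face m) (g g' : Face n) :
    ((eps (Fin.append f g) (Fin.append f' g') : ℤ) : ℝ) =
      (if g' = g then (eps f f' : ℝ) else 0) +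
        (if f' = f then (-1) ^ (fdim f') * (eps g g' : ℝ) else 0) := by
  rw [eps_append_real]
  congr 1
  · exact if_congr eq_comm rfl rfl
  · exact if_congr eq_comm rfl rfl

lemma ite_mul_expand (c : Prop) [Decidable c] (x1 x2 y1 y2 : ℝ) :
    (if c then (x1 + x2) * (y1 + y2) else 0) =
      ((if c then x1 * y1 else 0) + (if c then x2 * y2 else 0)) +
      ((if c then x1 * y2 else 0) + (if c then x2 * y1 else 0)) := by
  split
  · ring
  · simp

lemma sumX_EU (X : Finset (Face m)) (f f' : Face m) (j d : ℕ) (hd : fdim f + j = d) :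
    (∑ a ∈ X, if fdim a + j = d + 1 then (eps f a : ℝ) * (eps f' a : ℝ) else 0) =
      EU X (fdim f) f f' := by
  rw [EU, faceSet, Finset.sum_filter]
  exact Finset.sum_congr rfl fun a _ => if_congr (by omega) rfl rfl

lemma sumY_EU (Y : Finset (Face n)) (g g' : Face n) (i d : ℕ) (hd : i + fdim g = d) :
    (∑ b ∈ Y, if i + fdim b = d + 1 then (eps g b : ℝ) * (eps g' b : ℝ) else 0) =
      EU Y (fdim g) g g' := by
  rw [EU, faceSet, Finset.sum_filter]
  exact Finset.sum_congr rfl fun b _ => if_congr (by omega) rfl rfl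

lemma sumX_ED (X : Finset (Face m)) (f f' : Face m) (j d : ℕ) (hd : fdim f + j = d + 1) :
    (∑ a ∈ X, if fdim a + j = d then (eps a f : ℝ) * (eps a f' : ℝ) else 0) =
      ED X (fdim f) f f' := by
  rcases hi : fdim f with _ | i0
  · simp only [ED]
    apply Finset.sum_eq_zero
    intro a _
    rw [if_neg]
    omega
  · simp only [ED, faceSet, Finset.sum_filter]
    exact Finset.sum_congr rfl fun a _ => if_congr (by omega) rfl rfl

lemma sumY_ED (Y : Finset (Face n)) (g g' : Face n) (i d : ℕ) (hd : i + fdim g = d + 1) :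
    (∑ b ∈ Y, if i + fdim b = d then (eps b g : ℝ) * (eps b g' : ℝ) else 0) =
      ED Y (fdim g) g g' := by
  rcases hj : fdim g with _ | j0
  · simp only [ED]
    apply Finset.sum_eq_zero
    intro b _
    rw [if_neg]
    omega
  · simp only [ED, faceSet, Finset.sum_filter]
    exact Finset.sum_congr rfl fun b _ => if_congr (by omega) rfl rfl

lemma neg_one_sq_pow (i : ℕ) (x y : ℝ) : ((-1) ^ i * x) * ((-1) ^ i * y) = x * y := by
  rw [mul_mul_mul_comm, ← pow_add]
  have : Even (i + i) := ⟨i, rfl⟩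
  rw [this.neg_one_pow, one_mul]

lemma EU_append (X : Finset (Face m)) (Y : Finset (Face n)) (f f' : Face m) (g g' : Face n)
    (k : ℕ) (hf : f ∈ X) (hg : g ∈ Y) (hf' : f' ∈ X) (hg' : g' ∈ Y)
    (hd : fdim f + fdim g = k) :
    EU (cprod X Y) k (Fin.append f g) (Fin.append f' g') =
      ((if g = g' then EU X (fdim f) f f' else 0)
      + (if f = f' then EU Y (fdim g) g g' else 0))
      + ((if fdim f' + fdim g = k + 1 then
            (eps f f' : ℝ) * ((-1) ^ (fdim f') * (eps g' g : ℝ)) else 0)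
      + (if fdim f + fdim g' = k + 1 then
            ((-1) ^ (fdim f) * (eps g g' : ℝ)) * (eps f' f : ℝ) else 0)) := by
  rw [EU, sum_faceSet_cprod, Finset.sum_filter, Finset.sum_product]
  calc (∑ a ∈ X, ∑ b ∈ Y, if fdim a + fdim b = k + 1 then
          (eps (Fin.append f g) (Fin.append a b) : ℝ) *
            (eps (Fin.append f' g') (Fin.append a b) : ℝ) else 0)
      = ∑ a ∈ X, ∑ b ∈ Y,
        (((if fdim a + fdim b = k + 1 then
            (if g = b then (eps f a : ℝ) else 0) * (if g' = b then (eps f' a : ℝ) else 0) else 0)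
        + (if fdim a + fdim b = k + 1 then
            (if f = a then (-1) ^ (fdim a) * (eps g b : ℝ) else 0) *
              (if f' = a then (-1) ^ (fdim a) * (eps g' b : ℝ) else 0) else 0))
        + ((if fdim a + fdim b = k + 1 then
            (if g = b then (eps f a : ℝ) else 0) *
              (if f' = a then (-1) ^ (fdim a) * (eps g' b : ℝ) else 0) else 0)
        + (if fdim a + fdim b = k + 1 then
            (if f = a then (-1) ^ (fdim a) * (eps g b : ℝ) else 0) *
              (if g' = b then (eps f' a : ℝ) else 0) else 0))) := by
        refine Finset.sum_congr rfl fun a _ => Finset.sum_congr rfl fun b _ => ?_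
        rw [eps_append_real f a g b, eps_append_real f' a g' b, ite_mul_expand]
    _ = _ := by
        simp only [Finset.sum_add_distrib]
        rw [quad_LL X Y (k+1) (fun a _ => (eps f a : ℝ)) (fun a _ => (eps f' a : ℝ)) g g' hg,
          quad_RR X Y (k+1) (fun a b => (-1 : ℝ) ^ (fdim a) * (eps g b : ℝ))
            (fun a b => (-1 : ℝ) ^ (fdim a) * (eps g' b : ℝ)) f f' hf,
          quad_LR X Y (k+1) (fun a _ => (eps f a : ℝ))
            (fun a b => (-1 : ℝ) ^ (fdim a) * (eps g' b : ℝ)) g f' hg hf',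
          quad_RL X Y (k+1) (fun a b => (-1 : ℝ) ^ (fdim a) * (eps g b : ℝ))
            (fun a _ => (eps f' a : ℝ)) f g' hf hg']
        congr 2
        · rw [sumX_EU X f f' (fdim g) k hd]
        · split_ifs with h
          · subst h
            rw [← sumY_EU Y g g' (fdim f) k hd]
            refine Finset.sum_congr rfl fun b _ => ?_
            split
            · rw [neg_one_sq_pow]
            · rfl
          · rfl

lemma ED_append (X : Finset (Face m)) (Y : Finset (Face n)) (f f' : Face m) (g g' : Face n)
    (k : ℕ) (hf : f ∈ X) (hg : g ∈ Y) (hf' : f' ∈ X) (hg' : g' ∈ Y)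
    (hd : fdim f + fdim g = k) :
    ED (cprod X Y) k (Fin.append f g) (Fin.append f' g') =
      ((if g = g' then ED X (fdim f) f f' else 0)
      + (if f = f' then ED Y (fdim g) g g' else 0))
      + ((if fdim f' + fdim g + 1 = k then
            (eps f' f : ℝ) * ((-1) ^ (fdim f') * (eps g g' : ℝ)) else 0)
      + (if fdim f + fdim g' + 1 = k then
            ((-1) ^ (fdim f) * (eps g' g : ℝ)) * (eps f f' : ℝ) else 0)) := by
  rcases k with _ | K
  · have hi : fdim f = 0 := by omega
    have hj : fdim g = 0 := by omega
    rw [hi, hj]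
    simp [ED]
  · have hsum : ED (cprod X Y) (K + 1) (Fin.append f g) (Fin.append f' g') =
        ∑ h ∈ faceSet (cprod X Y) K,
          (eps h (Fin.append f g) : ℝ) * (eps h (Fin.append f' g') : ℝ) := rfl
    rw [hsum, sum_faceSet_cprod, Finset.sum_filter, Finset.sum_product]
    calc (∑ a ∈ X, ∑ b ∈ Y, if fdim a + fdim b = K then
            (eps (Fin.append a b) (Fin.append f g) : ℝ) *
              (eps (Fin.append a b) (Fin.append f' g') : ℝ) else 0)
        = ∑ a ∈ X, ∑ b ∈ Y,
          (((if fdim a + fdim b = K then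
              (if g = b then (eps a f : ℝ) else 0) * (if g' = b then (eps a f' : ℝ) else 0) else 0)
          + (if fdim a + fdim b = K then
              (if f = a then (-1) ^ (fdim f) * (eps b g : ℝ) else 0) *
                (if f' = a then (-1) ^ (fdim f') * (eps b g' : ℝ) else 0) else 0))
          + ((if fdim a + fdim b = K then
              (if g = b then (eps a f : ℝ) else 0) *
                (if f' = a then (-1) ^ (fdim f') * (eps b g' : ℝ) else 0) else 0)
          + (if fdim a + fdim b = K then
              (if f = a then (-1) ^ (fdim f) * (eps b g : ℝ) else 0) *
                (if g' = b then (eps a f' : ℝ) else 0) else 0))) := by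
          refine Finset.sum_congr rfl fun a _ => Finset.sum_congr rfl fun b _ => ?_
          rw [eps_append_real' a f b g, eps_append_real' a f' b g', ite_mul_expand]
      _ = _ := by
          simp only [Finset.sum_add_distrib]
          rw [quad_LL X Y K (fun a _ => (eps a f : ℝ)) (fun a _ => (eps a f' : ℝ)) g g' hg,
            quad_RR X Y K (fun _ b => (-1 : ℝ) ^ (fdim f) * (eps b g : ℝ))
              (fun _ b => (-1 : ℝ) ^ (fdim f') * (eps b g' : ℝ)) f f' hf,
            quad_LR X Y K (fun a _ => (eps a f : ℝ))
              (fun _ b => (-1 : ℝ) ^ (fdim f') * (eps b g' : ℝ)) g f' hg hf',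
            quad_RL X Y K (fun _ b => (-1 : ℝ) ^ (fdim f) * (eps b g : ℝ))
              (fun a _ => (eps a f' : ℝ)) f g' hf hg']
          congr 2
          · rw [sumX_ED X f f' (fdim g) K hd]
          · split_ifs with h
            · subst h
              rw [← sumY_ED Y g g' (fdim f) K hd]
              refine Finset.sum_congr rfl fun b _ => ?_
              split
              · rw [neg_one_sq_pow]
              · rfl
            · rfl
          · exact if_congr (by omega) (by ring) rfl
          · exact if_congr (by omega) (by ring) rfl

lemma ET_append (X : Finset (Face m)) (Y : Finset (Face n)) (f f' : Face m) (g g' : Face n)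
    (k : ℕ) (hf : f ∈ X) (hg : g ∈ Y) (hf' : f' ∈ X) (hg' : g' ∈ Y)
    (hd : fdim f + fdim g = k) (hd' : fdim f' + fdim g' = k) :
    ET (cprod X Y) k (Fin.append f g) (Fin.append f' g') =
      (if g = g' then ET X (fdim f) f f' else 0) +
        (if f = f' then ET Y (fdim g) g g' else 0) := by
  rw [ET, EU_append X Y f f' g g' k hf hg hf' hg' hd,
    ED_append X Y f f' g g' k hf hg hf' hg' hd]
  have c1 : (if fdim f' + fdim g = k + 1 then
        (eps f f' : ℝ) * ((-1) ^ (fdim f') * (eps g' g : ℝ)) else 0)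
      + (if fdim f + fdim g' + 1 = k then
        ((-1) ^ (fdim f) * (eps g' g : ℝ)) * (eps f f' : ℝ) else 0) = 0 := by
    by_cases h : fdim f' + fdim g = k + 1
    · rw [if_pos h, if_pos (by omega)]
      have hE : fdim f' = fdim f + 1 := by omega
      rw [hE, pow_succ]
      ring
    · rw [if_neg h, if_neg (by omega), add_zero]
  have c2 : (if fdim f + fdim g' = k + 1 then
        ((-1) ^ (fdim f) * (eps g g' : ℝ)) * (eps f' f : ℝ) else 0)
      + (if fdim f' + fdim g + 1 = k then
        (eps f' f : ℝ) * ((-1) ^ (fdim f') * (eps g g' : ℝ)) else 0) = 0 := by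
    by_cases h : fdim f + fdim g' = k + 1
    · rw [if_pos h, if_pos (by omega)]
      have hE : fdim f = fdim f' + 1 := by omega
      rw [hE, pow_succ]
      ring
    · rw [if_neg h, if_neg (by omega), add_zero]
  have split1 : (if g = g' then ET X (fdim f) f f' else 0) =
      (if g = g' then EU X (fdim f) f f' else 0) +
        (if g = g' then ED X (fdim f) f f' else 0) := by
    rw [ET]; split <;> simp
  have split2 : (if f = f' then ET Y (fdim g) g g' else 0) =
      (if f = f' then EU Y (fdim g) g g' else 0) +
        (if f = f' then ED Y (fdim g) g g' else 0) := by
    rw [ET]; split <;> simp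
  rw [split1, split2]
  linear_combination c1 + c2


lemma Ltot_apply {X : Finset (Face m)} {k : ℕ} (a b : {f // f ∈ faceSet X k}) :
    Ltot X k a b = ET X k a.1 b.1 := by
  rw [Ltot, ET, Matrix.add_apply]
  congr 1
  · rw [Lud, Matrix.mul_apply, EU, ← Finset.sum_coe_sort (faceSet X (k + 1))
      (fun h => (eps a.1 h : ℝ) * (eps b.1 h : ℝ))]
    rfl
  · rcases k with _ | j
    · rfl
    · rw [show Ldu X (j + 1) = (bdryM X j)ᵀ * bdryM X j from rfl, Matrix.mul_apply,
        show ED X (j + 1) a.1 b.1 =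
          ∑ h ∈ faceSet X j, (eps h a.1 : ℝ) * (eps h b.1 : ℝ) from rfl,
        ← Finset.sum_coe_sort (faceSet X j)
          (fun h => (eps h a.1 : ℝ) * (eps h b.1 : ℝ))]
      rfl

def fL (h : Face (m + n)) : Face m := fun a => h (Fin.castAdd n a)
def fR (h : Face (m + n)) : Face n := fun b => h (Fin.natAdd m b)

lemma append_fL_fR (h : Face (m + n)) : Fin.append (fL h) (fR h) = h := (eq_append h).symm

lemma fL_append (f : Face m) (g : Face n) : fL (Fin.append f g) = f :=
  funext fun a => Fin.append_left f g a

lemma fR_append (f : Face m) (g : Face n) : fR (Fin.append f g) = g :=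
  funext fun b => Fin.append_right f g b

lemma fdim_fL_fR (h : Face (m + n)) : fdim (fL h) + fdim (fR h) = fdim h := by
  conv_rhs => rw [← append_fL_fR h]
  rw [fdim_append]

lemma cprod_decomp {X : Finset (Face m)} {Y : Finset (Face n)} {h : Face (m + n)}
    (hh : h ∈ cprod X Y) : fL h ∈ X ∧ fR h ∈ Y := by
  rw [cprod, Finset.mem_image] at hh
  obtain ⟨p, hp, rfl⟩ := hh
  obtain ⟨hp1, hp2⟩ := Finset.mem_product.1 hp
  rw [fL_append, fR_append]
  exact ⟨hp1, hp2⟩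

lemma append_mem_cprod {X : Finset (Face m)} {Y : Finset (Face n)} {f : Face m} {g : Face n}
    (hf : f ∈ X) (hg : g ∈ Y) : Fin.append f g ∈ cprod X Y := by
  rw [cprod, Finset.mem_image]
  exact ⟨(f, g), Finset.mem_product.2 ⟨hf, hg⟩, rfl⟩

/-- Decomposition map. -/
def decFun (X : Finset (Face m)) (Y : Finset (Face n)) (k : ℕ)
    (h : {h // h ∈ faceSet (cprod X Y) k}) :
    Σ i : Fin (k + 1), {f // f ∈ faceSet X i.1} × {g // g ∈ faceSet Y (k - i.1)} :=
    ⟨⟨fdim (fL h.1), by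
      have h1 := (Finset.mem_filter.1 h.2).2
      have h2 := fdim_fL_fR h.1
      omega⟩,
    ⟨fL h.1, Finset.mem_filter.2 ⟨(cprod_decomp (Finset.mem_filter.1 h.2).1).1, rfl⟩⟩,
    ⟨fR h.1, Finset.mem_filter.2 ⟨(cprod_decomp (Finset.mem_filter.1 h.2).1).2, by
      have h1 := (Finset.mem_filter.1 h.2).2
      have h2 := fdim_fL_fR h.1
      show fdim (fR h.1) = k - fdim (fL h.1)
      omega⟩⟩⟩

/-- Concatenation map. -/
def appFun (X : Finset (Face m)) (Y : Finset (Face n)) (k : ℕ)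
    (s : Σ i : Fin (k + 1), {f // f ∈ faceSet X i.1} × {g // g ∈ faceSet Y (k - i.1)}) :
    {h // h ∈ faceSet (cprod X Y) k} :=
    ⟨Fin.append s.2.1.1 s.2.2.1, Finset.mem_filter.2
      ⟨append_mem_cprod (Finset.mem_filter.1 s.2.1.2).1 (Finset.mem_filter.1 s.2.2.2).1, by
        have h1 := (Finset.mem_filter.1 s.2.1.2).2
        have h2 := (Finset.mem_filter.1 s.2.2.2).2
        have h3 := s.1.isLt
        rw [fdim_append]
        omega⟩⟩

lemma appFun_decFun (X : Finset (Face m)) (Y : Finset (Face n)) (k : ℕ)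
    (h : {h // h ∈ faceSet (cprod X Y) k}) : appFun X Y k (decFun X Y k h) = h :=
  Subtype.ext (append_fL_fR h.1)

lemma appFun_inj (X : Finset (Face m)) (Y : Finset (Face n)) (k : ℕ) :
    Function.Injective (appFun X Y k) := by
  rintro ⟨⟨iv, hiv⟩, ⟨f, hf⟩, ⟨g, hg⟩⟩ ⟨⟨iv', hiv'⟩, ⟨f', hf'⟩, ⟨g', hg'⟩⟩ h
  have h0 : Fin.append f g = Fin.append f' g' := Subtype.ext_iff.1 h
  obtain ⟨rfl, rfl⟩ := append_inj h0
  have hiveq : iv = iv' := by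
    have a1 : fdim f = iv := (Finset.mem_filter.1 hf).2
    have a2 : fdim f = iv' := (Finset.mem_filter.1 hf').2
    omega
  subst hiveq
  rfl

/-- The index equivalence between `(X × Y)_k` and the disjoint union of `X_i × Y_{k-i}`. -/
def prodEquiv (X : Finset (Face m)) (Y : Finset (Face n)) (k : ℕ) :
    {h // h ∈ faceSet (cprod X Y) k} ≃
      (Σ i : Fin (k + 1), {f // f ∈ faceSet X i.1} × {g // g ∈ faceSet Y (k - i.1)}) where
  toFun := decFun X Y k
  invFun := appFun X Y k
  left_inv := appFun_decFun X Y k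
  right_inv s := appFun_inj X Y k (appFun_decFun X Y k (appFun X Y k s))


open Kronecker in
lemma reindex_Ltot (X : Finset (Face m)) (Y : Finset (Face n)) (k : ℕ) :
    Matrix.reindex (prodEquiv X Y k) (prodEquiv X Y k) (Ltot (cprod X Y) k) =
      Matrix.blockDiagonal' (fun i : Fin (k + 1) =>
        (Ltot X i.1 ⊗ₖ (1 : Matrix {g // g ∈ faceSet Y (k - i.1)}
            {g // g ∈ faceSet Y (k - i.1)} ℝ)) +
        ((1 : Matrix {f // f ∈ faceSet X i.1} {f // f ∈ faceSet X i.1} ℝ) ⊗ₖ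
            Ltot Y (k - i.1))) := by
  ext st st'
  obtain ⟨i, ⟨f, hf⟩, ⟨g, hg⟩⟩ := st
  obtain ⟨i', ⟨f', hf'⟩, ⟨g', hg'⟩⟩ := st'
  have hif : fdim f = i.1 := (Finset.mem_filter.1 hf).2
  have hig : fdim g = k - i.1 := (Finset.mem_filter.1 hg).2
  have hif' : fdim f' = i'.1 := (Finset.mem_filter.1 hf').2
  have hig' : fdim g' = k - i'.1 := (Finset.mem_filter.1 hg').2
  have hd : fdim f + fdim g = k := by have := i.isLt; omega
  have hd' : fdim f' + fdim g' = k := by have := i'.isLt; omega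
  have lhs_eq : (Matrix.reindex (prodEquiv X Y k) (prodEquiv X Y k) (Ltot (cprod X Y) k))
      ⟨i, ⟨f, hf⟩, ⟨g, hg⟩⟩ ⟨i', ⟨f', hf'⟩, ⟨g', hg'⟩⟩ =
      (if g = g' then ET X (fdim f) f f' else 0) +
        (if f = f' then ET Y (fdim g) g g' else 0) := by
    rw [Matrix.reindex_apply, Matrix.submatrix_apply]
    rw [show (prodEquiv X Y k).symm ⟨i, ⟨f, hf⟩, ⟨g, hg⟩⟩ =
      appFun X Y k ⟨i, ⟨f, hf⟩, ⟨g, hg⟩⟩ from rfl]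
    rw [show (prodEquiv X Y k).symm ⟨i', ⟨f', hf'⟩, ⟨g', hg'⟩⟩ =
      appFun X Y k ⟨i', ⟨f', hf'⟩, ⟨g', hg'⟩⟩ from rfl]
    rw [Ltot_apply]
    exact ET_append X Y f f' g g' k (Finset.mem_filter.1 hf).1 (Finset.mem_filter.1 hg).1
      (Finset.mem_filter.1 hf').1 (Finset.mem_filter.1 hg').1 hd hd'
  rw [lhs_eq]
  by_cases hii : i = i'
  · subst hii
    rw [Matrix.blockDiagonal'_apply_eq, Matrix.add_apply, Matrix.kroneckerMap_apply,
      Matrix.kroneckerMap_apply, Matrix.one_apply, Matrix.one_apply]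
    rw [hif, hig]
    by_cases hgg : g = g'
    · have : (⟨g, hg⟩ : {g // g ∈ faceSet Y (k - i.1)}) = ⟨g', hg'⟩ := Subtype.ext hgg
      rw [if_pos hgg, if_pos this]
      by_cases hff : f = f'
      · have : (⟨f, hf⟩ : {f // f ∈ faceSet X i.1}) = ⟨f', hf'⟩ := Subtype.ext hff
        rw [if_pos hff, if_pos this, Ltot_apply, Ltot_apply]
        ring
      · have : (⟨f, hf⟩ : {f // f ∈ faceSet X i.1}) ≠ ⟨f', hf'⟩ :=
          fun hc => hff (Subtype.ext_iff.1 hc)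
        rw [if_neg hff, if_neg this, Ltot_apply, Ltot_apply]
        ring
    · have : (⟨g, hg⟩ : {g // g ∈ faceSet Y (k - i.1)}) ≠ ⟨g', hg'⟩ :=
        fun hc => hgg (Subtype.ext_iff.1 hc)
      rw [if_neg hgg, if_neg this]
      by_cases hff : f = f'
      · have h2 : (⟨f, hf⟩ : {f // f ∈ faceSet X i.1}) = ⟨f', hf'⟩ := Subtype.ext hff
        rw [if_pos hff, if_pos h2, Ltot_apply, Ltot_apply]
        ring
      · have h2 : (⟨f, hf⟩ : {f // f ∈ faceSet X i.1}) ≠ ⟨f', hf'⟩ :=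
          fun hc => hff (Subtype.ext_iff.1 hc)
        rw [if_neg hff, if_neg h2, Ltot_apply, Ltot_apply]
        ring
  · rw [Matrix.blockDiagonal'_apply_ne _ _ _ hii]
    have hgg : g ≠ g' := by
      intro hc
      apply hii
      apply Fin.ext
      have := i.isLt; have := i'.isLt
      rw [hc] at hig
      omega
    have hff : f ≠ f' := by
      intro hc
      apply hii
      apply Fin.ext
      rw [hc] at hif
      omega
    rw [if_neg hgg, if_neg hff, add_zero]


end Aux

section LA
open Polynomial
variable {ι : Type} [Fintype ι] [DecidableEq ι] [LinearOrder ι]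
  {σ : ι → Type} [∀ i, Fintype (σ i)] [∀ i, DecidableEq (σ i)]
  {R : Type} [CommRing R]

lemma det_blockDiagonal'' (M : ∀ i, Matrix (σ i) (σ i) R) :
    (Matrix.blockDiagonal' M).det = ∏ i, (M i).det := by
  rw [(Matrix.blockTriangular_blockDiagonal' M).det_fintype]
  refine Finset.prod_congr rfl fun i _ => ?_
  let e : σ i ≃ {x : Σ j, σ j // x.1 = i} :=
    { toFun := fun x => ⟨⟨i, x⟩, rfl⟩
      invFun := fun y => (y.2 ▸ y.1.2 : σ i)
      left_inv := fun x => rfl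
      right_inv := by rintro ⟨⟨j, x⟩, rfl⟩; rfl }
  rw [← Matrix.det_submatrix_equiv_self e
    ((Matrix.blockDiagonal' M).toSquareBlock Sigma.fst i)]
  congr 1
  ext x y
  simp only [Matrix.submatrix_apply, Matrix.toSquareBlock_def, e, Equiv.coe_fn_mk]
  exact Matrix.blockDiagonal'_apply_eq M i x y

lemma charmatrix_blockDiagonal' (M : ∀ i, Matrix (σ i) (σ i) R) :
    Matrix.charmatrix (Matrix.blockDiagonal' M) =
      Matrix.blockDiagonal' (fun i => Matrix.charmatrix (M i)) := by
  ext ⟨i, x⟩ ⟨j, y⟩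
  rcases eq_or_ne i j with rfl | h
  · rcases eq_or_ne x y with rfl | hxy
    · rw [Matrix.charmatrix_apply_eq, Matrix.blockDiagonal'_apply_eq,
        Matrix.blockDiagonal'_apply_eq, Matrix.charmatrix_apply_eq]
    · have hne : (⟨i, x⟩ : Σ j, σ j) ≠ ⟨i, y⟩ := by
        intro hc
        exact hxy (by simpa using hc)
      rw [Matrix.charmatrix_apply_ne _ _ _ hne, Matrix.blockDiagonal'_apply_eq,
        Matrix.blockDiagonal'_apply_eq, Matrix.charmatrix_apply_ne _ _ _ hxy]
  · have hne : (⟨i, x⟩ : Σ j, σ j) ≠ ⟨j, y⟩ := by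
      intro hc
      exact h (congrArg Sigma.fst hc)
    rw [Matrix.charmatrix_apply_ne _ _ _ hne, Matrix.blockDiagonal'_apply_ne _ _ _ h,
      Matrix.blockDiagonal'_apply_ne _ _ _ h, map_zero, neg_zero]

lemma charpoly_blockDiagonal' (M : ∀ i, Matrix (σ i) (σ i) R) :
    (Matrix.blockDiagonal' M).charpoly = ∏ i, (M i).charpoly := by
  unfold Matrix.charpoly
  rw [charmatrix_blockDiagonal', det_blockDiagonal'']

lemma charpoly_conj {p : Type} [Fintype p] [DecidableEq p] (P M Q : Matrix p p R)
    (h1 : P * Q = 1) : (P * M * Q).charpoly = M.charpoly := by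
  unfold Matrix.charpoly
  have key : Matrix.charmatrix (P * M * Q) =
      P.map C * Matrix.charmatrix M * Q.map C := by
    have expand : ∀ N : Matrix p p R,
        Matrix.charmatrix N = Matrix.scalar p (X : R[X]) - N.map C := by
      intro N
      refine Matrix.ext fun i j => ?_
      rw [Matrix.charmatrix_apply]
      simp [Matrix.scalar_apply, Matrix.map_apply]
    rw [expand, expand, Matrix.map_mul, Matrix.map_mul, Matrix.mul_sub, Matrix.sub_mul]
    congr 1
    rw [mul_assoc, (Matrix.scalar_commute (X : R[X]) (fun r => Commute.all _ r) _).eq,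
      ← mul_assoc, ← Matrix.map_mul, h1, Matrix.map_one _ (map_zero C) (map_one C), one_mul]
  rw [key, Matrix.det_mul, Matrix.det_mul, mul_right_comm, ← Matrix.det_mul,
    ← Matrix.map_mul, h1, Matrix.map_one _ (map_zero C) (map_one C), Matrix.det_one, one_mul]

lemma charpoly_diagonal {p : Type} [Fintype p] [DecidableEq p] (d : p → R) :
    (Matrix.diagonal d).charpoly = ∏ i, (X - C (d i)) := by
  unfold Matrix.charpoly
  have : Matrix.charmatrix (Matrix.diagonal d) =
      Matrix.diagonal (fun i => X - C (d i)) := by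
    refine Matrix.ext fun i j => ?_
    rcases eq_or_ne i j with rfl | h
    · rw [Matrix.charmatrix_apply_eq, Matrix.diagonal_apply_eq, Matrix.diagonal_apply_eq]
    · rw [Matrix.charmatrix_apply_ne _ _ _ h, Matrix.diagonal_apply_ne _ h,
        Matrix.diagonal_apply_ne _ h, map_zero, neg_zero]
  rw [this, Matrix.det_diagonal]

lemma roots_charpoly_diagonal {p : Type} [Fintype p] [DecidableEq p] {K : Type} [Field K]
    (d : p → K) :
    (Matrix.diagonal d).charpoly.roots = Finset.univ.val.map d := by
  rw [charpoly_diagonal, Finset.prod_eq_multiset_prod,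
    show (fun i => X - C (d i)) = ((fun a => X - C a) ∘ d) from rfl,
    ← Multiset.map_map, Polynomial.roots_multiset_prod_X_sub_C]

lemma roots_charpoly_hermitian {p : Type} [Fintype p] [DecidableEq p] {A : Matrix p p ℝ}
    (hA : A.IsHermitian) :
    A.charpoly.roots = Finset.univ.val.map hA.eigenvalues := by
  have hsp := hA.spectral_theorem
  rw [RCLike.ofReal_real_eq_id, Function.id_comp] at hsp
  have hcp : A.charpoly = ((hA.eigenvectorUnitary : Matrix p p ℝ) *
      Matrix.diagonal hA.eigenvalues * star (hA.eigenvectorUnitary : Matrix p p ℝ)).charpoly :=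
    congrArg _ hsp
  rw [hcp, charpoly_conj _ _ _ ((Matrix.mem_unitaryGroup_iff).mp hA.eigenvectorUnitary.2),
    roots_charpoly_diagonal]


open Kronecker in
lemma kron_spectrum {p q : Type} [Fintype p] [DecidableEq p] [Fintype q] [DecidableEq q]
    (A : Matrix p p ℝ) (B : Matrix q q ℝ) (hA : A.IsHermitian) (hB : B.IsHermitian) :
    (A ⊗ₖ (1 : Matrix q q ℝ) + (1 : Matrix p p ℝ) ⊗ₖ B).charpoly.roots =
      A.charpoly.roots.bind (fun lam => B.charpoly.roots.map (lam + ·)) := by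
  set U : Matrix p p ℝ := (hA.eigenvectorUnitary : Matrix p p ℝ) with hUdef
  set V : Matrix q q ℝ := (hB.eigenvectorUnitary : Matrix q q ℝ) with hVdef
  have hU1 : U * star U = 1 := (Matrix.mem_unitaryGroup_iff).mp hA.eigenvectorUnitary.2
  have hV1 : V * star V = 1 := (Matrix.mem_unitaryGroup_iff).mp hB.eigenvectorUnitary.2
  have hspA : A = U * Matrix.diagonal hA.eigenvalues * star U := by
    have := hA.spectral_theorem
    rwa [RCLike.ofReal_real_eq_id, Function.id_comp] at this
  have hspB : B = V * Matrix.diagonal hB.eigenvalues * star V := by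
    have := hB.spectral_theorem
    rwa [RCLike.ofReal_real_eq_id, Function.id_comp] at this
  have t1 : (U ⊗ₖ V) * ((Matrix.diagonal hA.eigenvalues) ⊗ₖ (1 : Matrix q q ℝ)) *
      (star U ⊗ₖ star V) = A ⊗ₖ (1 : Matrix q q ℝ) := by
    rw [← Matrix.mul_kronecker_mul, ← Matrix.mul_kronecker_mul, mul_one, hV1, ← hspA]
  have t2 : (U ⊗ₖ V) * ((1 : Matrix p p ℝ) ⊗ₖ (Matrix.diagonal hB.eigenvalues)) *
      (star U ⊗ₖ star V) = (1 : Matrix p p ℝ) ⊗ₖ B := by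
    rw [← Matrix.mul_kronecker_mul, ← Matrix.mul_kronecker_mul, mul_one, hU1, ← hspB]
  have key : A ⊗ₖ (1 : Matrix q q ℝ) + (1 : Matrix p p ℝ) ⊗ₖ B =
      (U ⊗ₖ V) * ((Matrix.diagonal hA.eigenvalues) ⊗ₖ (1 : Matrix q q ℝ) +
        (1 : Matrix p p ℝ) ⊗ₖ (Matrix.diagonal hB.eigenvalues)) * (star U ⊗ₖ star V) := by
    rw [Matrix.mul_add, Matrix.add_mul, t1, t2]
  have hdiag : (Matrix.diagonal hA.eigenvalues) ⊗ₖ (1 : Matrix q q ℝ) +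
      (1 : Matrix p p ℝ) ⊗ₖ (Matrix.diagonal hB.eigenvalues) =
      Matrix.diagonal (fun ij : p × q => hA.eigenvalues ij.1 + hB.eigenvalues ij.2) := by
    rw [← Matrix.diagonal_one, ← Matrix.diagonal_one,
      Matrix.kroneckerMap_diagonal_diagonal _ zero_mul mul_zero,
      Matrix.kroneckerMap_diagonal_diagonal _ zero_mul mul_zero, Matrix.diagonal_add]
    congr 1
    funext ij
    simp
  have wkey : (U ⊗ₖ V) * (star U ⊗ₖ star V) = 1 := by
    rw [← Matrix.mul_kronecker_mul, hU1, hV1, Matrix.one_kronecker_one]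
  rw [key, hdiag, charpoly_conj _ _ _ wkey, roots_charpoly_diagonal,
    roots_charpoly_hermitian hA, roots_charpoly_hermitian hB]
  have huniv : (Finset.univ : Finset (p × q)).val =
      Finset.univ.val.bind (fun a : p => Finset.univ.val.map (Prod.mk a)) := by
    rw [← Finset.univ_product_univ, Finset.product_val]
    rfl
  rw [huniv, Multiset.map_bind, Multiset.bind_map]
  simp only [Multiset.map_map]
  rfl

end LA

lemma isHermitian_Ltot {n : ℕ} (X : Finset (Face n)) (k : ℕ) : (Ltot X k).IsHermitian := by
  apply Matrix.IsHermitian.add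
  · rw [Lud, ← Matrix.conjTranspose_eq_transpose_of_trivial]
    exact Matrix.isHermitian_mul_conjTranspose_self _
  · rcases k with _ | j
    · exact Matrix.isHermitian_zero
    · rw [show Ldu X (j + 1) = (bdryM X j)ᵀ * bdryM X j from rfl,
        ← Matrix.conjTranspose_eq_transpose_of_trivial]
      exact Matrix.isHermitian_conjTranspose_mul_self _

open Kronecker

/-- **Product formula for total Laplacian spectra** (Duval–Klivans–Martin,
Thm. 2.1 / §2.3).  For proper cubical complexes `X ⊆ Q_m`, `Y ⊆ Q_n` and `Z = X × Y`,
the multiset `s^tot_k(Z)` is the multiset sum over `i + j = k` of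
`{λ + μ : λ ∈ s^tot_i(X), μ ∈ s^tot_j(Y)}`. -/
theorem product_total_spectrum {m n : ℕ}
    (X : Finset (Face m)) (Y : Finset (Face n))
    (hX : IsComplex X) (hY : IsComplex Y) (k : ℕ) :
    stot (cprod X Y) k =
      ∑ i ∈ Finset.range (k + 1),
        (stot X i).bind fun lam => (stot Y (k - i)).map fun mu => lam + mu := by
  rw [stot, ← Matrix.charpoly_reindex (prodEquiv X Y k), reindex_Ltot,
    charpoly_blockDiagonal']
  rw [Polynomial.roots_prod _ _ (Finset.prod_ne_zero_iff.mpr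
    fun i _ => (Matrix.charpoly_monic _).ne_zero)]
  have step : ∀ i : Fin (k + 1),
      ((Ltot X i.1 ⊗ₖ (1 : Matrix {g // g ∈ faceSet Y (k - i.1)}
          {g // g ∈ faceSet Y (k - i.1)} ℝ)) +
        ((1 : Matrix {f // f ∈ faceSet X i.1} {f // f ∈ faceSet X i.1} ℝ) ⊗ₖ
          Ltot Y (k - i.1))).charpoly.roots =
      (stot X i.1).bind fun lam => (stot Y (k - i.1)).map fun mu => lam + mu := by
    intro i
    rw [kron_spectrum _ _ (isHermitian_Ltot X i.1) (isHermitian_Ltot Y (k - i.1))]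
    rfl
  have hbind : (Finset.univ.val.bind fun i : Fin (k + 1) =>
      ((Ltot X i.1 ⊗ₖ (1 : Matrix {g // g ∈ faceSet Y (k - i.1)}
          {g // g ∈ faceSet Y (k - i.1)} ℝ)) +
        ((1 : Matrix {f // f ∈ faceSet X i.1} {f // f ∈ faceSet X i.1} ℝ) ⊗ₖ
          Ltot Y (k - i.1))).charpoly.roots) =
      ∑ i : Fin (k + 1),
        (stot X i.1).bind fun lam => (stot Y (k - i.1)).map fun mu => lam + mu := by
    rw [show (Finset.univ.val.bind fun i : Fin (k + 1) =>
        ((Ltot X i.1 ⊗ₖ (1 : Matrix {g // g ∈ faceSet Y (k - i.1)}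
            {g // g ∈ faceSet Y (k - i.1)} ℝ)) +
          ((1 : Matrix {f // f ∈ faceSet X i.1} {f // f ∈ faceSet X i.1} ℝ) ⊗ₖ
            Ltot Y (k - i.1))).charpoly.roots) =
      ∑ i : Fin (k + 1),
        ((Ltot X i.1 ⊗ₖ (1 : Matrix {g // g ∈ faceSet Y (k - i.1)}
            {g // g ∈ faceSet Y (k - i.1)} ℝ)) +
          ((1 : Matrix {f // f ∈ faceSet X i.1} {f // f ∈ faceSet X i.1} ℝ) ⊗ₖ
            Ltot Y (k - i.1))).charpoly.roots from rfl]
    exact Finset.sum_congr rfl fun i _ => step i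
  rw [hbind]
  exact Fin.sum_univ_eq_sum_range
    (fun j => (stot X j).bind fun lam => (stot Y (k - j)).map fun mu => lam + mu) (k + 1)

end CubicalPaper
end

section
/- Prism spectrum, total Laplacians: Let X ⊆ Q_n be a proper cubical complex and let P X = {f ∈ Q_{n+1} : (f_1, …, f_n) ∈ X} be its prism. Then for every i ≥ 0, s^tot_i(P X) = s^tot_i(X) + (s^tot_i(X) + 2) + (s^tot_{i−1}(X) + 2), where for a multiset m of reals, m + 2 denotes {λ + 2 : λ ∈ m} (with multiplicity), + between multisets is multiset sum (disjoint union), and s^tot_{−1}(X) is the empty multiset. -/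
open BigOperators Matrix

namespace CubicalPaper

/-- The prism `P X ⊆ Q_{n+1}` over `X ⊆ Q_n`: all faces whose first `n` coordinates
form a face of `X`. -/
def prism {n : ℕ} (X : Finset (Face n)) : Finset (Face (n + 1)) :=
  Finset.univ.filter fun f => Fin.init f ∈ X


namespace Aux

open Finset Fin

variable {n : ℕ}

/-- Non-dependent `snoc` for faces. -/
def snoc3 (f : Face n) (c : Fin 3) : Face (n + 1) := Fin.snoc (α := fun _ => Fin 3) f c

@[simp] lemma snoc3_castSucc (f : Face n) (c : Fin 3) (i : Fin n) :
    snoc3 f c (Fin.castSucc i) = f i := by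
  simp [snoc3]

@[simp] lemma snoc3_last (f : Face n) (c : Fin 3) :
    snoc3 f c (Fin.last n) = c := by
  simp [snoc3]

@[simp] lemma init_snoc3 (f : Face n) (c : Fin 3) : Fin.init (snoc3 f c) = f := by
  simp [snoc3]

lemma snoc3_init_self (h : Face (n + 1)) : snoc3 (Fin.init h) (h (Fin.last n)) = h :=
  Fin.snoc_init_self (α := fun _ => Fin 3) h

lemma fin3_cases (c : Fin 3) : c = 0 ∨ c = 1 ∨ c = 2 := by revert c; decide

lemma fdim_snoc (f : Face n) (c : Fin 3) :
    fdim (snoc3 f c) = fdim f + if c = 2 then 1 else 0 := by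
  unfold fdim dir
  rw [Finset.card_filter, Finset.card_filter, Fin.sum_univ_castSucc]
  simp [snoc3_castSucc, snoc3_last]

@[simp] lemma fdim_snoc0 (f : Face n) : fdim (snoc3 f 0) = fdim f := by
  rw [fdim_snoc, if_neg (by decide : ¬((0 : Fin 3) = 2)), add_zero]

@[simp] lemma fdim_snoc1 (f : Face n) : fdim (snoc3 f 1) = fdim f := by
  rw [fdim_snoc, if_neg (by decide : ¬((1 : Fin 3) = 2)), add_zero]

@[simp] lemma fdim_snoc2 (f : Face n) : fdim (snoc3 f 2) = fdim f + 1 := by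
  rw [fdim_snoc, if_pos rfl]

lemma forall_snoc_castSucc (f g : Face n) (c d : Fin 3) (i : Fin n) :
    (∀ b : Fin (n+1), b ≠ Fin.castSucc i → snoc3 f c b = snoc3 g d b) ↔
      (c = d ∧ ∀ b : Fin n, b ≠ i → f b = g b) := by
  constructor
  · intro h
    refine ⟨?_, fun b hb => ?_⟩
    · have := h (Fin.last n) (Fin.ne_of_gt (Fin.castSucc_lt_last i))
      simpa using this
    · have := h (Fin.castSucc b) (by simpa [Fin.castSucc_inj] using hb)
      simpa using this
  · rintro ⟨rfl, h⟩ b hb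
    rcases Fin.eq_castSucc_or_eq_last b with ⟨j, rfl⟩ | rfl
    · have hj : j ≠ i := fun hji => hb (by rw [hji])
      simpa using h j hj
    · simp

lemma forall_snoc_last (f g : Face n) (c d : Fin 3) :
    (∀ b : Fin (n+1), b ≠ Fin.last n → snoc3 f c b = snoc3 g d b) ↔ f = g := by
  constructor
  · intro h
    funext b
    have := h (Fin.castSucc b) (Fin.ne_of_lt (Fin.castSucc_lt_last b))
    simpa using this
  · rintro rfl b hb
    rcases Fin.eq_castSucc_or_eq_last b with ⟨j, rfl⟩ | rfl
    · simp
    · exact absurd rfl hb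

lemma card_snoc_castSucc (g : Face n) (d : Fin 3) (i : Fin n) :
    (Finset.univ.filter fun b : Fin (n+1) =>
        snoc3 g d b = 2 ∧ b ≤ Fin.castSucc i).card =
      (Finset.univ.filter fun b : Fin n => g b = 2 ∧ b ≤ i).card := by
  rw [Finset.card_filter, Finset.card_filter, Fin.sum_univ_castSucc]
  simp [snoc3_castSucc, snoc3_last, Fin.castSucc_le_castSucc_iff,
    (Fin.castSucc_lt_last i).not_ge]

lemma card_snoc_last (g : Face n) :
    (Finset.univ.filter fun b : Fin (n+1) =>
        snoc3 g (2 : Fin 3) b = 2 ∧ b ≤ Fin.last n).card = fdim g + 1 := by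
  have : (Finset.univ.filter fun b : Fin (n+1) =>
      snoc3 g (2 : Fin 3) b = 2 ∧ b ≤ Fin.last n) =
      (Finset.univ.filter fun b : Fin (n+1) => snoc3 g (2 : Fin 3) b = 2) := by
    apply Finset.filter_congr
    intro b _
    simp [Fin.le_last]
  rw [this]
  have h2 := fdim_snoc g 2
  simpa [fdim, dir] using h2

lemma eps_snoc_same (f g : Face n) (c : Fin 3) :
    eps (snoc3 f c) (snoc3 g c) = eps f g := by
  unfold eps
  rw [Fin.sum_univ_castSucc]
  have hlast : (if (snoc3 g c (Fin.last n) = 2 ∧ snoc3 f c (Fin.last n) ≠ 2 ∧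
      ∀ b, b ≠ Fin.last n → snoc3 f c b = snoc3 g c b) then
      (-1 : ℤ) ^ ((Finset.univ.filter fun b => snoc3 g c b = 2 ∧ b ≤ Fin.last n).card +
        if snoc3 f c (Fin.last n) = 1 then 1 else 0) else 0) = 0 := by
    rw [if_neg]
    rintro ⟨h1, h2, -⟩
    simp only [snoc3_last] at h1 h2
    exact h2 h1
  rw [hlast, add_zero]
  apply Finset.sum_congr rfl
  intro i _
  have hiff : (snoc3 g c (Fin.castSucc i) = 2 ∧ snoc3 f c (Fin.castSucc i) ≠ 2 ∧
      ∀ b, b ≠ Fin.castSucc i → snoc3 f c b = snoc3 g c b) ↔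
      (g i = 2 ∧ f i ≠ 2 ∧ ∀ b, b ≠ i → f b = g b) := by
    simp [forall_snoc_castSucc]
  rw [if_congr hiff rfl rfl, snoc3_castSucc, card_snoc_castSucc]

end Aux

namespace Aux2
open Finset Fin Aux

variable {n : ℕ}

lemma eps_snoc_star (f g : Face n) (c : Fin 3) (hc : c ≠ 2) :
    eps (snoc3 f c) (snoc3 g 2) =
      (if f = g then (-1 : ℤ) ^ (fdim g + 1 + if c = 1 then 1 else 0) else 0) := by
  unfold eps
  rw [Fin.sum_univ_castSucc]
  have hzero : ∀ i : Fin n, (if (snoc3 g 2 (Fin.castSucc i) = 2 ∧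
      snoc3 f c (Fin.castSucc i) ≠ 2 ∧
      ∀ b, b ≠ Fin.castSucc i → snoc3 f c b = snoc3 g 2 b) then
      (-1 : ℤ) ^ ((Finset.univ.filter fun b => snoc3 g 2 b = 2 ∧ b ≤ Fin.castSucc i).card +
        if snoc3 f c (Fin.castSucc i) = 1 then 1 else 0) else 0) = 0 := by
    intro i
    rw [if_neg]
    rintro ⟨h1, h2, h3⟩
    rw [forall_snoc_castSucc] at h3
    exact hc h3.1
  rw [Finset.sum_congr rfl (fun i _ => hzero i), Finset.sum_const_zero, zero_add]
  have hcond : (snoc3 g 2 (Fin.last n) = 2 ∧ snoc3 f c (Fin.last n) ≠ 2 ∧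
      ∀ b, b ≠ Fin.last n → snoc3 f c b = snoc3 g 2 b) ↔ f = g := by
    simp [forall_snoc_last, hc]
  rw [if_congr hcond rfl rfl, card_snoc_last, snoc3_last]

lemma eps_snoc_ne (f g : Face n) (c d : Fin 3) (hd : d ≠ 2) (hcd : c ≠ d) :
    eps (snoc3 f c) (snoc3 g d) = 0 := by
  unfold eps
  rw [Fin.sum_univ_castSucc]
  have hzero : ∀ i : Fin n, (if (snoc3 g d (Fin.castSucc i) = 2 ∧
      snoc3 f c (Fin.castSucc i) ≠ 2 ∧
      ∀ b, b ≠ Fin.castSucc i → snoc3 f c b = snoc3 g d b) then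
      (-1 : ℤ) ^ ((Finset.univ.filter fun b => snoc3 g d b = 2 ∧ b ≤ Fin.castSucc i).card +
        if snoc3 f c (Fin.castSucc i) = 1 then 1 else 0) else 0) = 0 := by
    intro i
    rw [if_neg]
    rintro ⟨h1, h2, h3⟩
    rw [forall_snoc_castSucc] at h3
    exact hcd h3.1
  rw [Finset.sum_congr rfl (fun i _ => hzero i), Finset.sum_const_zero, zero_add, if_neg]
  rintro ⟨h1, -, -⟩
  rw [snoc3_last] at h1
  exact hd h1

end Aux2

namespace Aux3
open Finset Fin Aux Aux2

variable {n : ℕ}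

lemma mem_faceSet {X : Finset (Face n)} {f : Face n} {k : ℕ} :
    f ∈ faceSet X k ↔ f ∈ X ∧ fdim f = k := by
  simp [faceSet]

lemma mem_prism {X : Finset (Face n)} {h : Face (n + 1)} :
    h ∈ prism X ↔ Fin.init h ∈ X := by
  simp [prism]

lemma snoc3_zero_mem {X : Finset (Face n)} {f : Face n} {k : ℕ} :
    snoc3 f 0 ∈ faceSet (prism X) k ↔ f ∈ faceSet X k := by
  simp [mem_faceSet, mem_prism]

lemma snoc3_one_mem {X : Finset (Face n)} {f : Face n} {k : ℕ} :
    snoc3 f 1 ∈ faceSet (prism X) k ↔ f ∈ faceSet X k := by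
  simp [mem_faceSet, mem_prism]

lemma snoc3_two_mem {X : Finset (Face n)} {f : Face n} {k : ℕ} :
    snoc3 f 2 ∈ faceSet (prism X) (k + 1) ↔ f ∈ faceSet X k := by
  simp [mem_faceSet, mem_prism]

/-- `faceSetPred X k` is `X_{k-1}`, with `X_{-1} = ∅`. -/
def faceSetPred (X : Finset (Face n)) : ℕ → Finset (Face n)
  | 0 => (∅ : Finset (Face n))
  | (j + 1) => faceSet X j

instance predZeroEmpty (X : Finset (Face n)) : IsEmpty {f // f ∈ faceSetPred X 0} :=
  ⟨fun f => Finset.notMem_empty f.1 f.2⟩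

lemma mem_pred {X : Finset (Face n)} {f : Face n} {k : ℕ}
    (hf : f ∈ faceSetPred X k) : f ∈ X ∧ fdim f + 1 = k := by
  cases k with
  | zero => simp [faceSetPred] at hf
  | succ j =>
      rw [faceSetPred, mem_faceSet] at hf
      exact ⟨hf.1, by omega⟩

/-- Index type for the `k`-faces of the prism. -/
abbrev Ind (X : Finset (Face n)) (k : ℕ) : Type :=
  ({f // f ∈ faceSet X k} ⊕ {f // f ∈ faceSet X k}) ⊕ {f // f ∈ faceSetPred X k}

/-- The face of the prism corresponding to an index. -/
def toPrism (X : Finset (Face n)) (k : ℕ) (p : Ind X k) :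
    {f // f ∈ faceSet (prism X) k} :=
  match p with
  | Sum.inl (Sum.inl f) => ⟨snoc3 f.1 0, snoc3_zero_mem.2 f.2⟩
  | Sum.inl (Sum.inr f) => ⟨snoc3 f.1 1, snoc3_one_mem.2 f.2⟩
  | Sum.inr f => ⟨snoc3 f.1 2, by
      cases k with
      | zero => exact isEmptyElim f
      | succ j =>
          have hf : f.1 ∈ faceSet X j := f.2
          exact snoc3_two_mem.2 hf⟩

lemma toPrism_injective (X : Finset (Face n)) (k : ℕ) :
    Function.Injective (toPrism X k) := by
  have hinit : ∀ (f g : Face n) (c d : Fin 3), snoc3 f c = snoc3 g d → f = g := by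
    intro f g c d h
    have := congrArg Fin.init h
    simpa using this
  have hlast : ∀ (f g : Face n) (c d : Fin 3), snoc3 f c = snoc3 g d → c = d := by
    intro f g c d h
    have := congrFun h (Fin.last n)
    simpa using this
  rintro ((f | f) | f) ((g | g) | g) hfg <;>
    simp only [toPrism, Subtype.mk.injEq] at hfg
  · exact congrArg (fun x => Sum.inl (Sum.inl x)) (Subtype.ext (hinit _ _ _ _ hfg))
  · exact absurd (hlast _ _ _ _ hfg) (by decide)
  · exact absurd (hlast _ _ _ _ hfg) (by decide)
  · exact absurd (hlast _ _ _ _ hfg) (by decide)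
  · exact congrArg (fun x => Sum.inl (Sum.inr x)) (Subtype.ext (hinit _ _ _ _ hfg))
  · exact absurd (hlast _ _ _ _ hfg) (by decide)
  · exact absurd (hlast _ _ _ _ hfg) (by decide)
  · exact absurd (hlast _ _ _ _ hfg) (by decide)
  · exact congrArg Sum.inr (Subtype.ext (hinit _ _ _ _ hfg))

lemma toPrism_surjective (X : Finset (Face n)) (k : ℕ) :
    Function.Surjective (toPrism X k) := by
  rintro ⟨h, hmem⟩
  have hinit : Fin.init h ∈ X := mem_prism.1 (mem_faceSet.1 hmem).1
  have hdim : fdim h = k := (mem_faceSet.1 hmem).2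
  rcases fin3_cases (h (Fin.last n)) with hc | hc | hc <;>
    [skip; skip; skip] <;>
    (have hsnoc := snoc3_init_self h
     rw [hc] at hsnoc)
  · have hd : fdim (Fin.init h) = k := by
      have := congrArg fdim hsnoc
      rw [fdim_snoc0] at this
      omega
    exact ⟨Sum.inl (Sum.inl ⟨Fin.init h, mem_faceSet.2 ⟨hinit, hd⟩⟩), Subtype.ext hsnoc⟩
  · have hd : fdim (Fin.init h) = k := by
      have := congrArg fdim hsnoc
      rw [fdim_snoc1] at this
      omega
    exact ⟨Sum.inl (Sum.inr ⟨Fin.init h, mem_faceSet.2 ⟨hinit, hd⟩⟩), Subtype.ext hsnoc⟩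
  · have hd : fdim (Fin.init h) + 1 = k := by
      have := congrArg fdim hsnoc
      rw [fdim_snoc2] at this
      omega
    cases k with
    | zero => omega
    | succ j =>
        refine ⟨Sum.inr ⟨Fin.init h, ?_⟩, Subtype.ext hsnoc⟩
        show Fin.init h ∈ faceSet X j
        exact mem_faceSet.2 ⟨hinit, by omega⟩

/-- The structural equivalence between `Ind X k` and the `k`-faces of the prism. -/
noncomputable def E (X : Finset (Face n)) (k : ℕ) :
    Ind X k ≃ {f // f ∈ faceSet (prism X) k} :=
  Equiv.ofBijective _ ⟨toPrism_injective X k, toPrism_surjective X k⟩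

@[simp] lemma E_apply (X : Finset (Face n)) (k : ℕ) (p : Ind X k) :
    E X k p = toPrism X k p := rfl

end Aux3

namespace Aux4
open Finset Fin Aux Aux2 Aux3 Matrix

variable {n : ℕ}

/-- Boundary matrix between consecutive "predecessor" face sets. -/
def dP (X : Finset (Face n)) (k : ℕ) :
    Matrix {f // f ∈ faceSetPred X k} {f // f ∈ faceSetPred X (k + 1)} ℝ :=
  Matrix.of fun f g => (eps f.1 g.1 : ℝ)

lemma dP_succ (X : Finset (Face n)) (j : ℕ) : dP X (j + 1) = bdryM X j := rfl

/-- Identity-like matrix between `X_k` and `faceSetPred X (k+1)` (the same set). -/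
def Jm (X : Finset (Face n)) (k : ℕ) :
    Matrix {f // f ∈ faceSet X k} {f // f ∈ faceSetPred X (k + 1)} ℝ :=
  Matrix.of fun f g => if f.1 = g.1 then 1 else 0

lemma fdim_of_pred {X : Finset (Face n)} {k : ℕ}
    (g : {f // f ∈ faceSetPred X (k + 1)}) : fdim g.1 = k := by
  have := mem_pred g.2
  omega

lemma bdry_block (X : Finset (Face n)) (k : ℕ) :
    (bdryM (prism X) k).submatrix (E X k) (E X (k + 1)) =
      Matrix.fromBlocks
        (Matrix.fromBlocks (bdryM X k) 0 0 (bdryM X k))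
        (Matrix.fromRows (((-1 : ℝ) ^ (k + 1)) • Jm X k)
          (-(((-1 : ℝ) ^ (k + 1)) • Jm X k)))
        0 (dP X k) := by
  ext p q
  rcases p with ((f | f) | f) <;> rcases q with ((g | g) | g) <;>
    simp only [Matrix.submatrix_apply, E_apply, toPrism, bdryM, Matrix.of_apply,
      Matrix.fromBlocks_apply₁₁, Matrix.fromBlocks_apply₁₂, Matrix.fromBlocks_apply₂₁,
      Matrix.fromBlocks_apply₂₂, Matrix.fromRows_apply_inl, Matrix.fromRows_apply_inr,
      Matrix.zero_apply, Matrix.neg_apply, Matrix.smul_apply, Jm, dP, smul_eq_mul]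
  · rw [eps_snoc_same]
  · rw [eps_snoc_ne _ _ _ _ (by decide) (by decide)]; norm_num
  · rw [eps_snoc_star _ _ _ (by decide), fdim_of_pred g]
    split <;> simp [pow_succ]
  · rw [eps_snoc_ne _ _ _ _ (by decide) (by decide)]; norm_num
  · rw [eps_snoc_same]
  · rw [eps_snoc_star _ _ _ (by decide), fdim_of_pred g]
    split <;> simp [pow_succ]
  · rw [eps_snoc_ne _ _ _ _ (by decide) (by decide)]; norm_num
  · rw [eps_snoc_ne _ _ _ _ (by decide) (by decide)]; norm_num
  · rw [eps_snoc_same]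

end Aux4

namespace Aux5
open Finset Fin Aux Aux2 Aux3 Aux4 Matrix

variable {n : ℕ} {m₁ m₂ l r s : Type*}

lemma empty_col_eq {p m : Type*} [Fintype p] [IsEmpty p] (M N : Matrix m p ℝ) : M = N := by
  ext i j; exact isEmptyElim j

lemma empty_row_eq {p m : Type*} [Fintype p] [IsEmpty p] (M N : Matrix p m ℝ) : M = N := by
  ext i j; exact isEmptyElim i

lemma Jm_mul_transpose (X : Finset (Face n)) (k : ℕ) :
    (Jm X k * (Jm X k)ᵀ : Matrix {f // f ∈ faceSet X k} {f // f ∈ faceSet X k} ℝ) = 1 := by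
  ext f g
  rw [Matrix.mul_apply]
  have hf : f.1 ∈ faceSetPred X (k + 1) := f.2
  rw [Fintype.sum_eq_single (⟨f.1, hf⟩ : {h // h ∈ faceSetPred X (k + 1)})]
  · by_cases hfg : f = g
    · subst hfg; simp [Jm, Matrix.one_apply]
    · have h1 : (g : Face n) ≠ (f : Face n) := fun h => hfg (Subtype.ext h.symm)
      have h2 : (f : Face n) ≠ (g : Face n) := fun h => hfg (Subtype.ext h)
      simp [Jm, Matrix.one_apply, hfg, h1, h2]
  · intro h hh
    have : f.1 ≠ h.1 := fun hfh => hh (Subtype.ext hfh.symm)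
    simp [Jm, this]

lemma transpose_mul_Jm (X : Finset (Face n)) (k : ℕ) :
    ((Jm X k)ᵀ * Jm X k :
      Matrix {f // f ∈ faceSetPred X (k + 1)} {f // f ∈ faceSetPred X (k + 1)} ℝ) = 1 := by
  ext f g
  rw [Matrix.mul_apply]
  have hf : f.1 ∈ faceSet X k := f.2
  rw [Fintype.sum_eq_single (⟨f.1, hf⟩ : {h // h ∈ faceSet X k})]
  · by_cases hfg : f = g
    · subst hfg; simp [Jm, Matrix.one_apply]
    · have h1 : (g : Face n) ≠ (f : Face n) := fun h => hfg (Subtype.ext h.symm)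
      have h2 : (f : Face n) ≠ (g : Face n) := fun h => hfg (Subtype.ext h)
      simp [Jm, Matrix.one_apply, hfg, h1, h2]
  · intro h hh
    have : h.1 ≠ f.1 := fun hfh => hh (Subtype.ext hfh)
    simp [Jm, this]

lemma Jm_mul_dP_transpose (X : Finset (Face n)) (j : ℕ) :
    Jm X (j + 1) * (dP X (j + 1))ᵀ = (bdryM X j)ᵀ * Jm X j := by
  ext f g
  rw [Matrix.mul_apply, Matrix.mul_apply]
  have hf : f.1 ∈ faceSetPred X (j + 2) := f.2
  rw [Fintype.sum_eq_single (⟨f.1, hf⟩ : {h // h ∈ faceSetPred X (j + 2)})]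
  · have hg : g.1 ∈ faceSet X j := g.2
    rw [Fintype.sum_eq_single (⟨g.1, hg⟩ : {h // h ∈ faceSet X j})]
    · simp [Jm, dP, bdryM]
    · intro h hh
      have : h.1 ≠ g.1 := fun hfh => hh (Subtype.ext hfh)
      simp [Jm, this]
  · intro h hh
    have : f.1 ≠ h.1 := fun hfh => hh (Subtype.ext hfh.symm)
    simp [Jm, this]

lemma dP_transpose_mul_dP (X : Finset (Face n)) (j : ℕ) :
    (dP X j)ᵀ * dP X j = Ldu X j := by
  cases j with
  | zero =>
      ext f g
      rw [Matrix.mul_apply]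
      show ∑ h : {h // h ∈ faceSetPred X 0}, _ = Ldu X 0 f g
      rw [Finset.sum_of_isEmpty]
      show (0 : ℝ) = (0 : Matrix _ _ ℝ) f g
      simp
  | succ m => rfl

lemma dP_mul_dP_transpose (X : Finset (Face n)) (j : ℕ) :
    dP X (j + 1) * (dP X (j + 1))ᵀ = Lud X j := rfl

end Aux5

namespace Aux6
open Finset Fin Aux Aux2 Aux3 Aux4 Aux5 Matrix

variable {n : ℕ} {m₁ m₂ l : Type*}

lemma smul_fromRows (c : ℝ) (A : Matrix m₁ l ℝ) (B : Matrix m₂ l ℝ) :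
    c • Matrix.fromRows A B = Matrix.fromRows (c • A) (c • B) := by
  ext (i | i) j <;> simp

lemma neg_fromRows (A : Matrix m₁ l ℝ) (B : Matrix m₂ l ℝ) :
    -Matrix.fromRows A B = Matrix.fromRows (-A) (-B) := by
  ext (i | i) j <;> simp

lemma smul_fromColumns (c : ℝ) (A : Matrix l m₁ ℝ) (B : Matrix l m₂ ℝ) :
    c • Matrix.fromCols A B = Matrix.fromCols (c • A) (c • B) := by
  ext i (j | j) <;> simp

lemma neg_fromColumns (A : Matrix l m₁ ℝ) (B : Matrix l m₂ ℝ) :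
    -Matrix.fromCols A B = Matrix.fromCols (-A) (-B) := by
  ext i (j | j) <;> simp

lemma lud_prod (X : Finset (Face n)) (k : ℕ) :
    (Matrix.fromBlocks (Matrix.fromBlocks (bdryM X k) 0 0 (bdryM X k))
        (Matrix.fromRows (((-1 : ℝ) ^ (k + 1)) • Jm X k) (-(((-1 : ℝ) ^ (k + 1)) • Jm X k)))
        0 (dP X k)) *
      (Matrix.fromBlocks (Matrix.fromBlocks (bdryM X k) 0 0 (bdryM X k))
        (Matrix.fromRows (((-1 : ℝ) ^ (k + 1)) • Jm X k) (-(((-1 : ℝ) ^ (k + 1)) • Jm X k)))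
        0 (dP X k))ᵀ =
      Matrix.fromBlocks
        (Matrix.fromBlocks (Lud X k + 1) (-1) (-1) (Lud X k + 1))
        (Matrix.fromRows (((-1 : ℝ) ^ (k + 1)) • (Jm X k * (dP X k)ᵀ))
          (-(((-1 : ℝ) ^ (k + 1)) • (Jm X k * (dP X k)ᵀ))))
        (Matrix.fromCols (((-1 : ℝ) ^ (k + 1)) • (dP X k * (Jm X k)ᵀ))
          (-(((-1 : ℝ) ^ (k + 1)) • (dP X k * (Jm X k)ᵀ))))
        (dP X k * (dP X k)ᵀ) := by
  have hss : ((-1 : ℝ) ^ (k + 1)) * ((-1 : ℝ) ^ (k + 1)) = 1 := by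
    rw [← mul_pow]; norm_num
  simp only [Matrix.fromBlocks_transpose, Matrix.fromBlocks_multiply,
    Matrix.transpose_fromRows, Matrix.transpose_zero, Matrix.transpose_smul,
    Matrix.transpose_neg, Matrix.fromRows_mul_fromCols, Matrix.fromRows_mul,
    Matrix.mul_fromCols, Matrix.smul_mul, Matrix.mul_smul, smul_smul, hss,
    Matrix.zero_mul, Matrix.mul_zero, add_zero, zero_add, Matrix.neg_mul,
    Matrix.mul_neg, neg_neg, one_smul, Jm_mul_transpose, Lud,
    smul_fromRows, neg_fromRows, smul_fromColumns, neg_fromColumns, smul_neg,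
    Matrix.fromCols_fromRows_eq_fromBlocks, Matrix.fromBlocks_add]

lemma ldu_prod (X : Finset (Face n)) (j : ℕ) :
    (Matrix.fromBlocks (Matrix.fromBlocks (bdryM X j) 0 0 (bdryM X j))
        (Matrix.fromRows (((-1 : ℝ) ^ (j + 1)) • Jm X j) (-(((-1 : ℝ) ^ (j + 1)) • Jm X j)))
        0 (dP X j))ᵀ *
      (Matrix.fromBlocks (Matrix.fromBlocks (bdryM X j) 0 0 (bdryM X j))
        (Matrix.fromRows (((-1 : ℝ) ^ (j + 1)) • Jm X j) (-(((-1 : ℝ) ^ (j + 1)) • Jm X j)))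
        0 (dP X j)) =
      Matrix.fromBlocks
        (Matrix.fromBlocks ((bdryM X j)ᵀ * bdryM X j) 0 0 ((bdryM X j)ᵀ * bdryM X j))
        (Matrix.fromRows (((-1 : ℝ) ^ (j + 1)) • ((bdryM X j)ᵀ * Jm X j))
          (-(((-1 : ℝ) ^ (j + 1)) • ((bdryM X j)ᵀ * Jm X j))))
        (Matrix.fromCols (((-1 : ℝ) ^ (j + 1)) • ((Jm X j)ᵀ * bdryM X j))
          (-(((-1 : ℝ) ^ (j + 1)) • ((Jm X j)ᵀ * bdryM X j))))
        ((2 : ℝ) • (1 : Matrix {f // f ∈ faceSetPred X (j + 1)}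
            {f // f ∈ faceSetPred X (j + 1)} ℝ) + (dP X j)ᵀ * dP X j) := by
  have hss : ((-1 : ℝ) ^ (j + 1)) * ((-1 : ℝ) ^ (j + 1)) = 1 := by
    rw [← mul_pow]; norm_num
  simp only [Matrix.fromBlocks_transpose, Matrix.fromBlocks_multiply,
    Matrix.transpose_fromRows, Matrix.transpose_zero, Matrix.transpose_smul,
    Matrix.transpose_neg, Matrix.fromRows_mul_fromCols, Matrix.fromRows_mul,
    Matrix.mul_fromCols, Matrix.fromCols_mul_fromRows,
    Matrix.fromBlocks_mul_fromRows, Matrix.fromCols_mul_fromBlocks,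
    Matrix.smul_mul, Matrix.mul_smul, smul_smul, hss,
    Matrix.zero_mul, Matrix.mul_zero, add_zero, zero_add, Matrix.neg_mul,
    Matrix.mul_neg, neg_neg, one_smul, transpose_mul_Jm,
    smul_fromRows, neg_fromRows, smul_fromColumns, neg_fromColumns, smul_neg,
    Matrix.fromCols_fromRows_eq_fromBlocks, Matrix.fromBlocks_add,
    smul_zero, neg_zero, two_smul]

end Aux6

namespace Aux7
open Finset Fin Aux Aux2 Aux3 Aux4 Aux5 Aux6 Matrix

variable {n : ℕ}

/-- The third diagonal block: `L^tot_{k-1} + 2` (or the empty matrix for `k = 0`). -/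
noncomputable def W (X : Finset (Face n)) :
    (k : ℕ) → Matrix {f // f ∈ faceSetPred X k} {f // f ∈ faceSetPred X k} ℝ
  | 0 => 0
  | (j + 1) => (Ltot X j + (2 : ℝ) • 1 :
      Matrix {f // f ∈ faceSet X j} {f // f ∈ faceSet X j} ℝ)

lemma W_succ (X : Finset (Face n)) (j : ℕ) :
    W X (j + 1) = (Ltot X j + (2 : ℝ) • 1 :
      Matrix {f // f ∈ faceSet X j} {f // f ∈ faceSet X j} ℝ) := rfl

lemma Ltot_eq (X : Finset (Face n)) (k : ℕ) : Ltot X k = Lud X k + Ldu X k := rfl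

lemma W_succ_apply (X : Finset (Face n)) (j : ℕ) (p q : {f // f ∈ faceSetPred X (j + 1)}) :
    W X (j + 1) p q = Lud X j p q + (if p = q then 1 else 0) * 2 + Ldu X j p q := by
  have key : ∀ p q : {f // f ∈ faceSet X j}, (Lud X j + Ldu X j + (2 : ℝ) • 1) p q =
      Lud X j p q + (if p = q then 1 else 0) * 2 + Ldu X j p q := by
    intro p q
    rw [Matrix.add_apply, Matrix.add_apply, Matrix.smul_apply, Matrix.one_apply, smul_eq_mul]
    ring
  exact key p q

lemma Ldu_zero (X : Finset (Face n)) : Ldu X 0 = 0 := rfl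

lemma Ldu_succ (X : Finset (Face n)) (j : ℕ) :
    Ldu X (j + 1) = (bdryM X j)ᵀ * bdryM X j := rfl

lemma dP_mul_Jm_transpose (X : Finset (Face n)) (j : ℕ) :
    dP X (j + 1) * (Jm X (j + 1))ᵀ = (Jm X j)ᵀ * bdryM X j := by
  have h := congrArg Matrix.transpose (Jm_mul_dP_transpose X j)
  simpa [Matrix.transpose_mul] using h

lemma Ltot_block (X : Finset (Face n)) (k : ℕ) :
    (Ltot (prism X) k).submatrix (E X k) (E X k) =
      Matrix.fromBlocks
        (Matrix.fromBlocks (Ltot X k + 1) (-1) (-1) (Ltot X k + 1)) 0 0 (W X k) := by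
  have hud : (Lud (prism X) k).submatrix (E X k) (E X k) =
      Matrix.fromBlocks
        (Matrix.fromBlocks (Lud X k + 1) (-1) (-1) (Lud X k + 1))
        (Matrix.fromRows (((-1 : ℝ) ^ (k + 1)) • (Jm X k * (dP X k)ᵀ))
          (-(((-1 : ℝ) ^ (k + 1)) • (Jm X k * (dP X k)ᵀ))))
        (Matrix.fromCols (((-1 : ℝ) ^ (k + 1)) • (dP X k * (Jm X k)ᵀ))
          (-(((-1 : ℝ) ^ (k + 1)) • (dP X k * (Jm X k)ᵀ))))
        (dP X k * (dP X k)ᵀ) := by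
    have h0 : Lud (prism X) k = bdryM (prism X) k * (bdryM (prism X) k)ᵀ := rfl
    rw [h0, ← Matrix.submatrix_mul_equiv _ _ _ (E X (k + 1)) _,
      ← Matrix.transpose_submatrix, bdry_block, lud_prod]
  cases k with
  | zero =>
      have hdu : (Ldu (prism X) 0).submatrix (E X 0) (E X 0) = 0 := by
        have h0 : Ldu (prism X) 0 = 0 := rfl
        rw [h0]
        ext p q
        simp
      rw [Ltot_eq]
      simp only [Matrix.submatrix_add, Pi.add_apply]
      rw [hud, hdu, add_zero]
      have h1 : Ltot X 0 + 1 = Lud X 0 + 1 := by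
        rw [Ltot_eq, Ldu_zero, add_zero]
      rw [h1,
        empty_col_eq (Matrix.fromRows (((-1 : ℝ) ^ (0 + 1)) • (Jm X 0 * (dP X 0)ᵀ))
          (-(((-1 : ℝ) ^ (0 + 1)) • (Jm X 0 * (dP X 0)ᵀ)))) 0,
        empty_row_eq (Matrix.fromCols (((-1 : ℝ) ^ (0 + 1)) • (dP X 0 * (Jm X 0)ᵀ))
          (-(((-1 : ℝ) ^ (0 + 1)) • (dP X 0 * (Jm X 0)ᵀ)))) 0,
        empty_row_eq (dP X 0 * (dP X 0)ᵀ) (W X 0)]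
  | succ j =>
      have hdu : (Ldu (prism X) (j + 1)).submatrix (E X (j + 1)) (E X (j + 1)) =
          Matrix.fromBlocks
            (Matrix.fromBlocks ((bdryM X j)ᵀ * bdryM X j) 0 0 ((bdryM X j)ᵀ * bdryM X j))
            (Matrix.fromRows (((-1 : ℝ) ^ (j + 1)) • ((bdryM X j)ᵀ * Jm X j))
              (-(((-1 : ℝ) ^ (j + 1)) • ((bdryM X j)ᵀ * Jm X j))))
            (Matrix.fromCols (((-1 : ℝ) ^ (j + 1)) • ((Jm X j)ᵀ * bdryM X j))
              (-(((-1 : ℝ) ^ (j + 1)) • ((Jm X j)ᵀ * bdryM X j))))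
            ((2 : ℝ) • (1 : Matrix {f // f ∈ faceSetPred X (j + 1)}
                {f // f ∈ faceSetPred X (j + 1)} ℝ) + (dP X j)ᵀ * dP X j) := by
        have h0 : Ldu (prism X) (j + 1) =
            (bdryM (prism X) j)ᵀ * bdryM (prism X) j := rfl
        rw [h0, ← Matrix.submatrix_mul_equiv _ _ _ (E X j) _,
          ← Matrix.transpose_submatrix, bdry_block, ldu_prod]
      rw [Ltot_eq]
      simp only [Matrix.submatrix_add, Pi.add_apply]
      rw [hud, hdu]
      ext p q
      rcases p with ((p | p) | p) <;> rcases q with ((q | q) | q) <;>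
        simp only [Matrix.add_apply, Matrix.fromBlocks_apply₁₁, Matrix.fromBlocks_apply₁₂,
          Matrix.fromBlocks_apply₂₁, Matrix.fromBlocks_apply₂₂,
          Matrix.fromRows_apply_inl, Matrix.fromRows_apply_inr,
          Matrix.fromCols_apply_inl, Matrix.fromCols_apply_inr,
          Matrix.zero_apply, Matrix.neg_apply, Matrix.smul_apply, Matrix.one_apply,
          Ltot_eq, Ldu_succ, smul_eq_mul, pow_succ] <;>
        simp -failIfUnchanged only [Jm_mul_dP_transpose, dP_mul_Jm_transpose, dP_mul_dP_transpose,
          dP_transpose_mul_dP, W_succ_apply] <;>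
        ring
end Aux7

namespace Aux8
open Finset Matrix Polynomial

variable {m : Type*} [Fintype m] [DecidableEq m]

lemma charpoly_conj (P D Q : Matrix m m ℝ) (h1 : P * Q = 1) (h2 : Q * P = 1) :
    (P * D * Q).charpoly = D.charpoly := by
  have hscalar : ∀ M : Matrix m m ℝ[X],
      M * Matrix.scalar m (X : ℝ[X]) = Matrix.scalar m (X : ℝ[X]) * M := by
    intro M
    exact (Matrix.scalar_commute (X : ℝ[X]) (fun r => Commute.all _ _) M).symm
  have hmat : charmatrix (P * D * Q) =
      P.map Polynomial.C * charmatrix D * Q.map Polynomial.C := by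
    show Matrix.scalar m (X : ℝ[X]) - (Polynomial.C : ℝ →+* ℝ[X]).mapMatrix (P * D * Q) =
      P.map Polynomial.C * (Matrix.scalar m (X : ℝ[X]) -
        (Polynomial.C : ℝ →+* ℝ[X]).mapMatrix D) * Q.map Polynomial.C
    rw [Matrix.mul_sub, Matrix.sub_mul]
    congr 1
    · rw [hscalar (P.map Polynomial.C), Matrix.mul_assoc, ← Matrix.map_mul, h1,
        Matrix.map_one _ (map_zero _) (map_one _), Matrix.mul_one]
    · simp only [RingHom.mapMatrix_apply]
      rw [← Matrix.map_mul, ← Matrix.map_mul]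
  rw [Matrix.charpoly, hmat, Matrix.det_mul, Matrix.det_mul, Matrix.charpoly]
  have : (P.map Polynomial.C).det * (Q.map Polynomial.C).det = 1 := by
    rw [← Matrix.det_mul, ← Matrix.map_mul, h1, Matrix.map_one _ (map_zero _) (map_one _),
      Matrix.det_one]
  calc (P.map Polynomial.C).det * (charmatrix D).det * (Q.map Polynomial.C).det
      = (charmatrix D).det * ((P.map Polynomial.C).det * (Q.map Polynomial.C).det) := by ring
    _ = (charmatrix D).det := by rw [this, mul_one]

lemma charpoly_add_smul_one (A : Matrix m m ℝ) (c : ℝ) :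
    (A + c • 1).charpoly = A.charpoly.comp (X - Polynomial.C c) := by
  have hcomp : ∀ p : ℝ[X], p.comp (X - Polynomial.C c) =
      Polynomial.eval₂RingHom Polynomial.C (X - Polynomial.C c) p := fun p => rfl
  rw [Matrix.charpoly, Matrix.charpoly, hcomp, RingHom.map_det]
  congr 1
  ext i j
  by_cases hij : i = j
  · subst hij
    simp [charmatrix_apply, Matrix.one_apply, eval₂_sub]
    ring
  · simp [charmatrix_apply, Matrix.one_apply, hij, Matrix.diagonal_apply_ne _ hij]

lemma roots_comp_X_sub_C (p : ℝ[X]) (c : ℝ) :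
    (p.comp (X - Polynomial.C c)).roots = p.roots.map (· + c) := by
  ext a
  have h1 : (p.roots.map (· + c)).count a = p.roots.count (a - c) := by
    have h2 := Multiset.count_map_eq_count' (· + c) p.roots (fun x y hxy => by
      simpa using congrArg (· - c) hxy) (a - c)
    simpa using h2
  rw [h1, Polynomial.count_roots, Polynomial.count_roots]
  rw [Polynomial.rootMultiplicity_eq_rootMultiplicity, Polynomial.comp_assoc]
  have : (X - Polynomial.C c).comp (X + Polynomial.C a) = X + Polynomial.C (a - c) := by
    simp [sub_comp, add_comp]
    ring
  rw [this, ← Polynomial.rootMultiplicity_eq_rootMultiplicity]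

lemma roots_charpoly_add_smul_one (A : Matrix m m ℝ) (c : ℝ) :
    (A + c • 1).charpoly.roots = A.charpoly.roots.map (· + c) := by
  rw [charpoly_add_smul_one, roots_comp_X_sub_C]

lemma charpoly_isEmpty {p : Type*} [Fintype p] [IsEmpty p] [DecidableEq p]
    (M : Matrix p p ℝ) : M.charpoly = 1 := by
  rw [Matrix.charpoly, Matrix.det_isEmpty]

lemma charpoly_twoBlock (T : Matrix m m ℝ) :
    (Matrix.fromBlocks (T + 1) (-1) (-1) (T + 1)).charpoly =
      T.charpoly * (T + (2 : ℝ) • 1).charpoly := by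
  have key : Matrix.fromBlocks (T + 1) (-1) (-1) (T + 1) =
      (Matrix.fromBlocks 1 1 1 (-1) : Matrix (m ⊕ m) (m ⊕ m) ℝ) *
        Matrix.fromBlocks T 0 0 (T + (2 : ℝ) • 1) *
        ((1/2 : ℝ) • (Matrix.fromBlocks 1 1 1 (-1) : Matrix (m ⊕ m) (m ⊕ m) ℝ)) := by
    ext (p | p) (q | q) <;>
      simp [Matrix.fromBlocks_multiply, Matrix.mul_smul, Matrix.fromBlocks_smul,
        Matrix.add_apply, Matrix.smul_apply, Matrix.one_apply, Matrix.neg_apply,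
        smul_eq_mul, mul_comm] <;>
      split <;> ring
  have hPQ : (Matrix.fromBlocks 1 1 1 (-1) : Matrix (m ⊕ m) (m ⊕ m) ℝ) *
      ((1/2 : ℝ) • (Matrix.fromBlocks 1 1 1 (-1) : Matrix (m ⊕ m) (m ⊕ m) ℝ)) = 1 := by
    rw [Matrix.mul_smul, Matrix.fromBlocks_multiply]
    ext (p | p) (q | q) <;>
      simp [Matrix.fromBlocks_smul, Matrix.smul_apply, Matrix.one_apply, smul_eq_mul] <;>
      split <;> norm_num
  have hQP : ((1/2 : ℝ) • (Matrix.fromBlocks 1 1 1 (-1) : Matrix (m ⊕ m) (m ⊕ m) ℝ)) *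
      (Matrix.fromBlocks 1 1 1 (-1) : Matrix (m ⊕ m) (m ⊕ m) ℝ) = 1 := by
    rw [Matrix.smul_mul, Matrix.fromBlocks_multiply]
    ext (p | p) (q | q) <;>
      simp [Matrix.fromBlocks_smul, Matrix.smul_apply, Matrix.one_apply, smul_eq_mul] <;>
      split <;> norm_num
  rw [key, charpoly_conj _ _ _ hPQ hQP, Matrix.charpoly_fromBlocks_zero₂₁]

end Aux8

section Final
open Finset Matrix Polynomial Aux Aux2 Aux3 Aux4 Aux5 Aux6 Aux7 Aux8

lemma stot_prism_eq {n : ℕ} (X : Finset (Face n)) (k : ℕ) :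
    stot (prism X) k = (Ltot X k).charpoly.roots +
      (Ltot X k).charpoly.roots.map (· + 2) + (W X k).charpoly.roots := by
  have h1 : (Ltot (prism X) k).charpoly =
      ((Ltot (prism X) k).submatrix (E X k) (E X k)).charpoly := by
    have h2 : (Ltot (prism X) k).submatrix (E X k) (E X k) =
        Matrix.reindex (E X k).symm (E X k).symm (Ltot (prism X) k) := rfl
    rw [h2, Matrix.charpoly_reindex]
  rw [stot, h1, Ltot_block, Matrix.charpoly_fromBlocks_zero₂₁, charpoly_twoBlock]
  have hT : (Ltot X k).charpoly ≠ 0 := (Matrix.charpoly_monic _).ne_zero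
  have hT2 : (Ltot X k + (2 : ℝ) • 1).charpoly ≠ 0 := (Matrix.charpoly_monic _).ne_zero
  have hW : (W X k).charpoly ≠ 0 := (Matrix.charpoly_monic _).ne_zero
  rw [Polynomial.roots_mul (mul_ne_zero (mul_ne_zero hT hT2) hW),
    Polynomial.roots_mul (mul_ne_zero hT hT2),
    roots_charpoly_add_smul_one]

theorem prism_total_spectrum' {n : ℕ} (X : Finset (Face n)) (hX : IsComplex X) :
    (stot (prism X) 0 = stot X 0 + (stot X 0).map (fun lam => lam + 2)) ∧
      ∀ i : ℕ, stot (prism X) (i + 1) =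
        stot X (i + 1) + (stot X (i + 1)).map (fun lam => lam + 2) +
          (stot X i).map (fun mu => mu + 2) := by
  constructor
  · rw [stot_prism_eq X 0, charpoly_isEmpty (W X 0), Polynomial.roots_one]
    simp [stot, Multiset.empty_eq_zero]
  · intro i
    rw [stot_prism_eq X (i + 1)]
    exact congrArg (fun t => (Ltot X (i + 1)).charpoly.roots +
      (Ltot X (i + 1)).charpoly.roots.map (· + 2) + t) (roots_charpoly_add_smul_one (Ltot X i) 2)

end Final

/-- **Prism spectrum, total Laplacians** (Duval–Klivans–Martin, Thm. 3.2, eqn. (3.3c)).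
For a proper cubical complex `X ⊆ Q_n` and every `i ≥ 0`,
`s^tot_i(P X) = s^tot_i(X) + (s^tot_i(X) + 2) + (s^tot_{i-1}(X) + 2)`
as multisets, where `s^tot_{-1}(X)` is the empty multiset. -/
theorem prism_total_spectrum {n : ℕ} (X : Finset (Face n)) (hX : IsComplex X) :
    (stot (prism X) 0 = stot X 0 + (stot X 0).map (fun lam => lam + 2)) ∧
      ∀ i : ℕ, stot (prism X) (i + 1) =
        stot X (i + 1) + (stot X (i + 1)).map (fun lam => lam + 2) +
          (stot X i).map (fun mu => mu + 2) := by
  exact prism_total_spectrum' X hX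

end CubicalPaper
end

section
/- Total Laplacian spectra of cubes: For all n ≥ 1 and 0 ≤ k ≤ n, the characteristic polynomial of the total Laplacian L^tot_k of the full cube Q_n (taking X = Q_n, all faces) equals ∏_{i=0}^{n−k} (y − (2k + 2i))^{binom(n,k) · binom(n−k,i)}. In particular all eigenvalues of L^tot_k(Q_n) are even integers, so cubes and their skeletons are Laplacian integral. -/
open BigOperators Matrix

namespace CubicalPaper

/-! ### Auxiliary development -/

section Aux

open Finset Function

variable {n : ℕ}

/-- `f` is obtained from `g` by filling the star at coordinate `a`. -/
def Cov (f g : Face n) (a : Fin n) : Prop :=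
  g a = 2 ∧ f a ≠ 2 ∧ ∀ b, b ≠ a → f b = g b

/-- The sign attached to a covering pair. -/
def sgnv (f g : Face n) (a : Fin n) : ℤ :=
  (-1 : ℤ) ^ ((Finset.univ.filter fun b => g b = 2 ∧ b ≤ a).card +
    if f a = 1 then 1 else 0)

lemma cov_unique {f g : Face n} {a a' : Fin n} (h : Cov f g a) (h' : Cov f g a') :
    a = a' := by
  by_contra hne
  have h1 : f a' = g a' := h.2.2 a' (fun e => hne e.symm)
  exact h'.2.1 (h1.trans h'.1)

lemma sgnv_mul_self (f g : Face n) (a : Fin n) : sgnv f g a * sgnv f g a = 1 := by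
  unfold sgnv
  rw [← pow_add]
  exact (neg_one_pow_eq_one_iff_even (by norm_num)).2 (Even.add_self _)

lemma eps_of_cov {f g : Face n} {a : Fin n} (h : Cov f g a) : eps f g = sgnv f g a := by
  unfold eps
  rw [Finset.sum_eq_single a]
  · rw [if_pos (show g a = 2 ∧ f a ≠ 2 ∧ ∀ b, b ≠ a → f b = g b from ⟨h.1, h.2.1, h.2.2⟩)]; rfl
  · intro b _ hb
    rw [if_neg]
    intro hc
    exact hb (cov_unique ⟨hc.1, hc.2.1, hc.2.2⟩ h)
  · intro hmem; exact absurd (Finset.mem_univ a) hmem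

lemma eps_of_not {f g : Face n} (h : ∀ a, ¬ Cov f g a) : eps f g = 0 := by
  unfold eps
  apply Finset.sum_eq_zero
  intro a _
  rw [if_neg (fun hc => h a ⟨hc.1, hc.2.1, hc.2.2⟩)]

/-! ### Face utilities -/

lemma mem_faceSet_univ {f : Face n} {k : ℕ} :
    f ∈ faceSet (Finset.univ : Finset (Face n)) k ↔ fdim f = k := by
  simp [faceSet]

lemma dir_update_ne2 (f : Face n) (a : Fin n) {v : Fin 3} (hv : v ≠ 2) :
    dir (update f a v) = (dir f).erase a := by
  ext b
  rcases eq_or_ne b a with rfl | hb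
  · simp [dir, update_self, hv]
  · simp [dir, update_of_ne hb, hb]

lemma dir_update_two (f : Face n) (a : Fin n) :
    dir (update f a 2) = insert a (dir f) := by
  ext b
  rcases eq_or_ne b a with rfl | hb
  · simp [dir]
  · simp [dir, update_of_ne hb, hb]

lemma mem_dir {f : Face n} {a : Fin n} : a ∈ dir f ↔ f a = 2 := by simp [dir]

lemma fdim_up {f : Face n} {a : Fin n} (hfa : f a ≠ 2) :
    fdim (update f a 2) = fdim f + 1 := by
  unfold fdim
  rw [dir_update_two, Finset.card_insert_of_notMem (fun h => hfa (mem_dir.1 h))]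

lemma fdim_down {f : Face n} {a : Fin n} {v : Fin 3} (hfa : f a = 2) (hv : v ≠ 2) :
    fdim f = fdim (update f a v) + 1 := by
  unfold fdim
  rw [dir_update_ne2 f a hv, Finset.card_erase_add_one (mem_dir.2 hfa)]

lemma cov_up {f : Face n} {a : Fin n} (hfa : f a ≠ 2) : Cov f (update f a 2) a :=
  ⟨update_self a 2 f, hfa, fun b hb => (update_of_ne hb 2 f).symm⟩

lemma cov_down {f : Face n} {a : Fin n} {v : Fin 3} (hfa : f a = 2) (hv : v ≠ 2) :
    Cov (update f a v) f a :=
  ⟨hfa, by simpa using hv, fun b hb => update_of_ne hb v f⟩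

lemma cov_eq_up {f g : Face n} {a : Fin n} (h : Cov f g a) : g = update f a 2 := by
  funext b
  rcases eq_or_ne b a with rfl | hb
  · rw [update_self]; exact h.1
  · rw [update_of_ne hb, h.2.2 b hb]

lemma cov_eq_down {e f : Face n} {a : Fin n} (h : Cov e f a) : e = update f a (e a) := by
  funext b
  rcases eq_or_ne b a with rfl | hb
  · rw [update_self]
  · rw [update_of_ne hb, h.2.2 b hb]

lemma card_ne2 {f : Face n} {k : ℕ} (h : fdim f = k) :
    (Finset.univ.filter fun a => f a ≠ 2).card = n - k := by
  have h2 : (Finset.univ.filter fun a => f a = 2).card +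
      (Finset.univ.filter fun a => ¬ (f a = 2)).card = Finset.univ.card :=
    Finset.card_filter_add_card_filter_not _
  have hk : (Finset.univ.filter fun a => f a = 2).card = k := h
  rw [hk, Finset.card_univ, Fintype.card_fin] at h2
  simp only [ne_eq]
  omega

/-! ### Collapsed entry formulas -/

lemma fin3_mem01 {v : Fin 3} : v ∈ ({0,1} : Finset (Fin 3)) ↔ v ≠ 2 := by
  fin_cases v <;> decide

lemma Lud_entry {k : ℕ} {f h : Face n} (pf : f ∈ faceSet (Finset.univ : Finset (Face n)) k)
    (ph : h ∈ faceSet (Finset.univ : Finset (Face n)) k) :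
    Lud (Finset.univ : Finset (Face n)) k ⟨f, pf⟩ ⟨h, ph⟩ =
      ∑ a ∈ Finset.univ.filter (fun a => f a ≠ 2),
        ((eps f (update f a 2) : ℝ) * (eps h (update f a 2) : ℝ)) := by
  have hf : fdim f = k := mem_faceSet_univ.1 pf
  have step1 : Lud (Finset.univ : Finset (Face n)) k ⟨f, pf⟩ ⟨h, ph⟩ =
      ∑ G ∈ faceSet (Finset.univ : Finset (Face n)) (k+1), ((eps f G : ℝ) * (eps h G : ℝ)) := by
    rw [Lud, Matrix.mul_apply, ← Finset.sum_coe_sort (faceSet (Finset.univ : Finset (Face n)) (k+1))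
      (fun G => ((eps f G : ℝ) * (eps h G : ℝ)))]
    rfl
  have hsub : ((Finset.univ.filter fun a => f a ≠ 2).image (fun a => update f a 2)) ⊆
      faceSet (Finset.univ : Finset (Face n)) (k+1) := by
    intro G hG
    rcases Finset.mem_image.1 hG with ⟨a, ha, rfl⟩
    have hfa : f a ≠ 2 := (Finset.mem_filter.1 ha).2
    exact mem_faceSet_univ.2 (by rw [fdim_up hfa, hf])
  have hz : ∀ G ∈ faceSet (Finset.univ : Finset (Face n)) (k+1),
      G ∉ ((Finset.univ.filter fun a => f a ≠ 2).image (fun a => update f a 2)) →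
      ((eps f G : ℝ) * (eps h G : ℝ)) = 0 := by
    intro G _ hG
    have : eps f G = 0 := by
      apply eps_of_not
      intro a hcov
      exact hG (Finset.mem_image.2 ⟨a, Finset.mem_filter.2 ⟨Finset.mem_univ a, hcov.2.1⟩,
        (cov_eq_up hcov).symm⟩)
    rw [this]; simp
  have hinj : Set.InjOn (fun a => update f a 2)
      ↑(Finset.univ.filter fun a => f a ≠ 2) := by
    intro a ha a' ha' heq
    by_contra hne
    have := congrFun heq a
    simp only [update_self] at this
    rw [update_of_ne hne] at this
    exact (Finset.mem_coe.1 ha |> Finset.mem_filter.1).2 this.symm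
  rw [step1, ← Finset.sum_subset hsub hz, Finset.sum_image hinj]

lemma Ldu_entry {k : ℕ} {f h : Face n} (pf : f ∈ faceSet (Finset.univ : Finset (Face n)) (k+1))
    (ph : h ∈ faceSet (Finset.univ : Finset (Face n)) (k+1)) :
    Ldu (Finset.univ : Finset (Face n)) (k+1) ⟨f, pf⟩ ⟨h, ph⟩ =
      ∑ p ∈ (dir f) ×ˢ ({0,1} : Finset (Fin 3)),
        ((eps (update f p.1 p.2) f : ℝ) * (eps (update f p.1 p.2) h : ℝ)) := by
  have hf : fdim f = k + 1 := mem_faceSet_univ.1 pf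
  have step1 : Ldu (Finset.univ : Finset (Face n)) (k+1) ⟨f, pf⟩ ⟨h, ph⟩ =
      ∑ e ∈ faceSet (Finset.univ : Finset (Face n)) k, ((eps e f : ℝ) * (eps e h : ℝ)) := by
    rw [Ldu, Matrix.mul_apply, ← Finset.sum_coe_sort (faceSet (Finset.univ : Finset (Face n)) k)
      (fun e => ((eps e f : ℝ) * (eps e h : ℝ)))]
    rfl
  have hsub : (((dir f) ×ˢ ({0,1} : Finset (Fin 3))).image (fun p => update f p.1 p.2)) ⊆
      faceSet (Finset.univ : Finset (Face n)) k := by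
    intro e he
    rcases Finset.mem_image.1 he with ⟨p, hp, rfl⟩
    rcases Finset.mem_product.1 hp with ⟨hp1, hp2⟩
    have h1 : f p.1 = 2 := mem_dir.1 hp1
    have h2 : p.2 ≠ 2 := fin3_mem01.1 hp2
    apply mem_faceSet_univ.2
    have := fdim_down (f := f) (a := p.1) (v := p.2) h1 h2
    omega
  have hz : ∀ e ∈ faceSet (Finset.univ : Finset (Face n)) k,
      e ∉ (((dir f) ×ˢ ({0,1} : Finset (Fin 3))).image (fun p => update f p.1 p.2)) →
      ((eps e f : ℝ) * (eps e h : ℝ)) = 0 := by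
    intro e _ he
    have : eps e f = 0 := by
      apply eps_of_not
      intro a hcov
      refine he (Finset.mem_image.2 ⟨(a, e a), Finset.mem_product.2
        ⟨mem_dir.2 hcov.1, fin3_mem01.2 hcov.2.1⟩, (cov_eq_down hcov).symm⟩)
    rw [this]; simp
  have hinj : Set.InjOn (fun p : Fin n × Fin 3 => update f p.1 p.2)
      ↑((dir f) ×ˢ ({0,1} : Finset (Fin 3))) := by
    intro p hp q hq heq
    simp only [Finset.coe_product, Set.mem_prod, Finset.mem_coe] at hp hq
    have hp1 : f p.1 = 2 := mem_dir.1 hp.1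
    have hq1 : f q.1 = 2 := mem_dir.1 hq.1
    have hp2 : p.2 ≠ 2 := fin3_mem01.1 hp.2
    have h1 : p.1 = q.1 := by
      by_contra hne
      have := congrFun heq p.1
      simp only [update_self] at this
      rw [update_of_ne (fun e => hne e) ] at this
      exact hp2 (this.trans hp1)
    have h2 : p.2 = q.2 := by
      have h3 : update f p.1 p.2 p.1 = update f q.1 q.2 p.1 := congrFun heq p.1
      rw [update_self, h1, update_self] at h3
      exact h3
    exact Prod.ext h1 h2
  rw [step1, ← Finset.sum_subset hsub hz, Finset.sum_image hinj]

/-! ### Sign lemmas -/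

/-- Number of stars of `g` at coordinates `≤ x`. -/
def cnt (g : Face n) (x : Fin n) : ℕ := (Finset.univ.filter fun b => g b = 2 ∧ b ≤ x).card

lemma sgnv_eq (f g : Face n) (a : Fin n) :
    sgnv f g a = (-1 : ℤ) ^ (cnt g a + if f a = 1 then 1 else 0) := rfl

lemma cnt_up {f : Face n} {a : Fin n} (hfa : f a ≠ 2) (x : Fin n) :
    cnt (update f a 2) x = cnt f x + if a ≤ x then 1 else 0 := by
  unfold cnt
  by_cases hax : a ≤ x
  · rw [if_pos hax]
    have hset : (Finset.univ.filter fun b => update f a 2 b = 2 ∧ b ≤ x) =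
        insert a (Finset.univ.filter fun b => f b = 2 ∧ b ≤ x) := by
      ext b
      rcases eq_or_ne b a with rfl | hb
      · simp [update_self, hax]
      · simp [update_of_ne hb, hb]
    rw [hset, Finset.card_insert_of_notMem (by simp [hfa])]
  · rw [if_neg hax]
    have hset : (Finset.univ.filter fun b => update f a 2 b = 2 ∧ b ≤ x) =
        (Finset.univ.filter fun b => f b = 2 ∧ b ≤ x) := by
      ext b
      rcases eq_or_ne b a with rfl | hb
      · simp [update_self, hax, hfa]
      · simp [update_of_ne hb]
    rw [hset, Nat.add_zero]

lemma ite3_sum_one {x y : Fin 3} (hx : x ≠ 2) (hy : y ≠ 2) (hxy : x ≠ y) :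
    ((if x = 1 then 1 else 0) + (if y = 1 then 1 else 0) : ℕ) = 1 := by
  fin_cases x <;> fin_cases y <;> simp_all <;> decide

lemma sgnv_mul_sgnv_same {f h G : Face n} {a : Fin n} (hf : f a ≠ 2) (hh : h a ≠ 2)
    (hne : f a ≠ h a) : sgnv f G a * sgnv h G a = -1 := by
  rw [sgnv_eq, sgnv_eq, ← pow_add]
  have h1 := ite3_sum_one hf hh hne
  have : cnt G a + (if f a = 1 then 1 else 0) + (cnt G a + if h a = 1 then 1 else 0) =
      2 * cnt G a + 1 := by omega
  rw [this, pow_succ, pow_mul]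
  simp

lemma ite_le_sum_one {a c : Fin n} (hac : a ≠ c) :
    ((if a ≤ c then 1 else 0) + (if c ≤ a then 1 else 0) : ℕ) = 1 := by
  rcases le_total a c with h | h
  · rw [if_pos h, if_neg (fun h' => hac (le_antisymm h h'))]
  · rw [if_neg (fun h' => hac (le_antisymm h' h)), if_pos h]

lemma diamond_sign {f h : Face n} {a c : Fin n} (hac : a ≠ c) (hfa : f a ≠ 2)
    (hha : h a = 2) (hfc : f c = 2) (hhc : h c ≠ 2)
    (hagree : ∀ b, b ≠ a → b ≠ c → f b = h b) :
    sgnv f (update f a 2) a * sgnv h (update f a 2) c +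
      sgnv (update f c (h c)) f c * sgnv (update f c (h c)) h a = 0 := by
  have hG : update f a 2 = update h c 2 := by
    funext b
    rcases eq_or_ne b a with rfl | hba
    · rw [update_self, update_of_ne hac, hha]
    · rcases eq_or_ne b c with rfl | hbc
      · rw [update_of_ne hba, update_self, hfc]
      · rw [update_of_ne hba, update_of_ne hbc, hagree b hba hbc]
  simp only [sgnv_eq]
  rw [update_self, update_of_ne hac]
  have hA : cnt (update f a 2) c = cnt f c + if a ≤ c then 1 else 0 := cnt_up hfa c
  have hB : cnt (update f a 2) a = cnt h a + if c ≤ a then 1 else 0 := by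
    rw [hG]; exact cnt_up hhc a
  rw [← pow_add, ← pow_add]
  have hE : cnt (update f a 2) a + (if f a = 1 then 1 else 0) +
      (cnt (update f a 2) c + (if h c = 1 then 1 else 0)) =
      (cnt f c + (if h c = 1 then 1 else 0) +
        (cnt h a + (if f a = 1 then 1 else 0))) + 1 := by
    have := ite_le_sum_one hac
    omega
  rw [hE, pow_succ]
  ring

/-! ### The entry formula for the total Laplacian of the full cube -/

/-- Single flip relation at coordinate `a`. -/
def SF (f h : Face n) (a : Fin n) : Prop :=
  f a ≠ 2 ∧ h a ≠ 2 ∧ ∀ b, b ≠ a → f b = h b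

/-- Diamond relation: `f` and `h` differ exactly at `a` (where `f` is filled, `h` starred)
and `c` (where `f` is starred, `h` filled). -/
def DM (f h : Face n) (a c : Fin n) : Prop :=
  a ≠ c ∧ f a ≠ 2 ∧ h a = 2 ∧ f c = 2 ∧ h c ≠ 2 ∧ ∀ b, b ≠ a → b ≠ c → f b = h b

instance {f h : Face n} {a : Fin n} : Decidable (SF f h a) := by
  unfold SF; infer_instance

lemma ne_at {f h : Face n} {a : Fin n} (hne : f ≠ h) (hag : ∀ b, b ≠ a → f b = h b) :
    f a ≠ h a := fun e => hne (funext fun b => by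
      rcases eq_or_ne b a with rfl | hb
      · exact e
      · exact hag b hb)

lemma SF_unique {f h : Face n} {a a' : Fin n} (hne : f ≠ h) (hs : SF f h a)
    (hs' : SF f h a') : a = a' := by
  by_contra hne'
  exact ne_at hne hs.2.2 (hs'.2.2 a (fun e => hne' e))

lemma Ltot_entry {k : ℕ} (hk : k ≤ n) {f h : Face n}
    (pf : f ∈ faceSet (Finset.univ : Finset (Face n)) k)
    (ph : h ∈ faceSet (Finset.univ : Finset (Face n)) k) :
    Ltot (Finset.univ : Finset (Face n)) k ⟨f, pf⟩ ⟨h, ph⟩ =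
      if f = h then ((n : ℝ) + k) else if ∃ a, SF f h a then -1 else 0 := by
  have hf : fdim f = k := mem_faceSet_univ.1 pf
  have hhd : fdim h = k := mem_faceSet_univ.1 ph
  rw [Ltot, Matrix.add_apply]
  rcases eq_or_ne f h with rfl | hne
  · -- diagonal entry
    rw [if_pos rfl]
    have hud : Lud (Finset.univ : Finset (Face n)) k ⟨f, pf⟩ ⟨f, ph⟩ = ((n - k : ℕ) : ℝ) := by
      rw [Lud_entry pf ph]
      rw [Finset.sum_congr rfl (fun a ha => ?_), Finset.sum_const, card_ne2 hf,
        nsmul_eq_mul, mul_one]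
      have hfa : f a ≠ 2 := (Finset.mem_filter.1 ha).2
      rw [eps_of_cov (cov_up hfa), ← Int.cast_mul, sgnv_mul_self]
      exact Int.cast_one
    have hdu : Ldu (Finset.univ : Finset (Face n)) k ⟨f, pf⟩ ⟨f, ph⟩ = ((2 * k : ℕ) : ℝ) := by
      cases k with
      | zero => rw [Ldu]; simp
      | succ j =>
        rw [Ldu_entry pf ph]
        rw [Finset.sum_congr rfl (fun p hp => ?_), Finset.sum_const, Finset.card_product,
          nsmul_eq_mul, mul_one]
        · rw [show (dir f).card = j + 1 from hf]
          norm_num [mul_comm]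
        · rcases Finset.mem_product.1 hp with ⟨h1, h2⟩
          rw [eps_of_cov (cov_down (mem_dir.1 h1) (fin3_mem01.1 h2)), ← Int.cast_mul,
            sgnv_mul_self]
          exact Int.cast_one
    rw [hud, hdu]
    rw [Nat.cast_sub hk]
    push_cast
    ring
  · -- off-diagonal entry
    rw [if_neg hne]
    by_cases hSF : ∃ a, SF f h a
    · rcases hSF with ⟨a0, hsf⟩
      rw [if_pos ⟨a0, hsf⟩]
      have hfh0 : f a0 ≠ h a0 := ne_at hne hsf.2.2
      have hud : Lud (Finset.univ : Finset (Face n)) k ⟨f, pf⟩ ⟨h, ph⟩ = -1 := by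
        rw [Lud_entry pf ph]
        rw [Finset.sum_eq_single_of_mem a0
          (Finset.mem_filter.2 ⟨Finset.mem_univ _, hsf.1⟩)]
        · have hcovf : Cov f (update f a0 2) a0 := cov_up hsf.1
          have hcovh : Cov h (update f a0 2) a0 :=
            ⟨update_self _ _ _, hsf.2.1,
              fun b hb => (hsf.2.2 b hb).symm.trans (update_of_ne hb 2 f).symm⟩
          rw [eps_of_cov hcovf, eps_of_cov hcovh, ← Int.cast_mul,
            sgnv_mul_sgnv_same hsf.1 hsf.2.1 hfh0]
          norm_num
        · intro a ha haa0
          have hfa : f a ≠ 2 := (Finset.mem_filter.1 ha).2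
          have : eps h (update f a 2) = 0 := by
            apply eps_of_not
            intro c hcov
            rcases eq_or_ne c a with rfl | hca
            · exact haa0 (SF_unique hne
                ⟨hfa, hcov.2.1, fun b hb =>
                  ((hcov.2.2 b hb).trans (update_of_ne hb 2 f)).symm⟩ hsf)
            · have hha : h a = 2 := (hcov.2.2 a hca.symm).trans (update_self _ _ _)
              have hane : a ≠ a0 := fun e => hsf.2.1 (e ▸ hha)
              exact hfa ((hsf.2.2 a hane).trans hha)
          rw [this]
          simp
      have hdu : Ldu (Finset.univ : Finset (Face n)) k ⟨f, pf⟩ ⟨h, ph⟩ = 0 := by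
        cases k with
        | zero => rw [Ldu]; simp
        | succ j =>
          rw [Ldu_entry pf ph]
          apply Finset.sum_eq_zero
          intro p hp
          rcases Finset.mem_product.1 hp with ⟨h1, h2⟩
          have hfa : f p.1 = 2 := mem_dir.1 h1
          have hv : p.2 ≠ 2 := fin3_mem01.1 h2
          have : eps (update f p.1 p.2) h = 0 := by
            apply eps_of_not
            intro c hcov
            rcases eq_or_ne c p.1 with rfl | hca
            · have hane : p.1 ≠ a0 := fun e => hsf.1 (e ▸ hfa)
              exact ne_at hne hsf.2.2
                ((update_of_ne (Ne.symm hane) p.2 f).symm.trans (hcov.2.2 a0 (Ne.symm hane)))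
            · have hfc : f c ≠ 2 := by
                have := hcov.2.1
                rwa [update_of_ne hca] at this
              have hca0 : c ≠ a0 := fun e => hsf.2.1 (e ▸ hcov.1)
              exact hfc ((hsf.2.2 c hca0).trans hcov.1)
          rw [this]
          simp
      rw [hud, hdu]
      norm_num
    · rw [if_neg hSF]
      by_cases hDM : ∃ a c, DM f h a c
      · rcases hDM with ⟨a0, c0, hdm⟩
        obtain ⟨hac, hfa0, hha0, hfc0, hhc0, hag⟩ := hdm
        -- k is positive since c0 ∈ dir f
        have hkpos : 0 < k := by
          rw [← hf]
          exact Finset.card_pos.2 ⟨c0, mem_dir.2 hfc0⟩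
        have hud : Lud (Finset.univ : Finset (Face n)) k ⟨f, pf⟩ ⟨h, ph⟩ =
            ((sgnv f (update f a0 2) a0 * sgnv h (update f a0 2) c0 : ℤ) : ℝ) := by
          rw [Lud_entry pf ph]
          rw [Finset.sum_eq_single_of_mem a0
            (Finset.mem_filter.2 ⟨Finset.mem_univ _, hfa0⟩)]
          · have hcovf : Cov f (update f a0 2) a0 := cov_up hfa0
            have hcovh : Cov h (update f a0 2) c0 := by
              refine ⟨?_, hhc0, ?_⟩
              · rw [update_of_ne (fun e => hac e.symm)]; exact hfc0
              · intro b hb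
                rcases eq_or_ne b a0 with rfl | hb0
                · rw [update_self]; exact hha0
                · rw [update_of_ne hb0]; exact (hag b hb0 hb).symm
            rw [eps_of_cov hcovf, eps_of_cov hcovh, Int.cast_mul]
          · intro a ha haa0
            have hfa : f a ≠ 2 := (Finset.mem_filter.1 ha).2
            have : eps h (update f a 2) = 0 := by
              apply eps_of_not
              intro c hcov
              rcases eq_or_ne c a with rfl | hca
              · exact hSF ⟨c, hfa, hcov.2.1,
                  fun b hb => ((hcov.2.2 b hb).trans (update_of_ne hb 2 f)).symm⟩
              · have hha : h a = 2 := (hcov.2.2 a hca.symm).trans (update_self _ _ _)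
                have h1 : a ≠ c0 := fun e => hfa (e ▸ hfc0)
                exact haa0 (by
                  by_contra hne'
                  exact hfa ((hag a hne' h1).trans hha))
            rw [this]
            simp
        obtain ⟨j, rfl⟩ : ∃ j, k = j + 1 := ⟨k - 1, by omega⟩
        have hdu : Ldu (Finset.univ : Finset (Face n)) (j+1) ⟨f, pf⟩ ⟨h, ph⟩ =
            ((sgnv (update f c0 (h c0)) f c0 * sgnv (update f c0 (h c0)) h a0 : ℤ) : ℝ) := by
          rw [Ldu_entry pf ph]
          rw [Finset.sum_eq_single_of_mem (c0, h c0)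
            (Finset.mem_product.2 ⟨mem_dir.2 hfc0, fin3_mem01.2 hhc0⟩)]
          · have hcovf : Cov (update f c0 (h c0)) f c0 := cov_down hfc0 hhc0
            have hcovh : Cov (update f c0 (h c0)) h a0 := by
              refine ⟨hha0, ?_, ?_⟩
              · rw [update_of_ne hac]; exact hfa0
              · intro b hb
                rcases eq_or_ne b c0 with rfl | hbc
                · rw [update_self]
                · rw [update_of_ne hbc]; exact hag b hb hbc
            rw [eps_of_cov hcovf, eps_of_cov hcovh, Int.cast_mul]
          · intro p hp hpne
            rcases Finset.mem_product.1 hp with ⟨h1, h2⟩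
            have hfa : f p.1 = 2 := mem_dir.1 h1
            have hv : p.2 ≠ 2 := fin3_mem01.1 h2
            have : eps (update f p.1 p.2) h = 0 := by
              apply eps_of_not
              intro c hcov
              rcases eq_or_ne c p.1 with rfl | hca
              · have h3 : p.1 ≠ a0 := fun e => hfa0 (e ▸ hfa)
                exact ne_at hne
                  (fun b hb => ((update_of_ne hb p.2 f).symm.trans (hcov.2.2 b hb)))
                  (by rw [hfa, hcov.1])
              · have hfc : f c ≠ 2 := by
                  have := hcov.2.1
                  rwa [update_of_ne hca] at this
                have hcc0 : c ≠ c0 := fun e => hfc (e ▸ hfc0)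
                have hca0 : c = a0 := by
                  by_contra hne'
                  exact hfc ((hag c hne' hcc0).trans hcov.1)
                have hpa : p.1 ≠ a0 := fun e => hfa0 (e ▸ hfa)
                have hha' : h p.1 = p.2 := by
                  have h5 := hcov.2.2 p.1 hca.symm
                  rw [update_self] at h5
                  exact h5.symm
                have hp1c0 : p.1 = c0 := by
                  by_contra hne'
                  exact hv (hha'.symm.trans ((hag p.1 hpa hne').symm.trans hfa))
                exact hpne (by
                  rw [Prod.ext_iff]
                  exact ⟨hp1c0, by rw [← hha', hp1c0]⟩)
            rw [this]
            simp
        rw [hud, hdu, ← Int.cast_add,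
          diamond_sign hac hfa0 hha0 hfc0 hhc0 hag]
        exact Int.cast_zero
      · have hud : Lud (Finset.univ : Finset (Face n)) k ⟨f, pf⟩ ⟨h, ph⟩ = 0 := by
          rw [Lud_entry pf ph]
          apply Finset.sum_eq_zero
          intro a ha
          have hfa : f a ≠ 2 := (Finset.mem_filter.1 ha).2
          have : eps h (update f a 2) = 0 := by
            apply eps_of_not
            intro c hcov
            rcases eq_or_ne c a with rfl | hca
            · exact hSF ⟨c, hfa, hcov.2.1,
                fun b hb => ((hcov.2.2 b hb).trans (update_of_ne hb 2 f)).symm⟩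
            · have hha : h a = 2 := (hcov.2.2 a hca.symm).trans (update_self _ _ _)
              have hfc : f c = 2 := by
                have := hcov.1
                rwa [update_of_ne hca] at this
              exact hDM ⟨a, c, hca.symm, hfa, hha, hfc, hcov.2.1,
                fun b hb hbc => ((hcov.2.2 b hbc).trans (update_of_ne hb 2 f)).symm⟩
          rw [this]
          simp
        have hdu : Ldu (Finset.univ : Finset (Face n)) k ⟨f, pf⟩ ⟨h, ph⟩ = 0 := by
          cases k with
          | zero => rw [Ldu]; simp
          | succ j =>
            rw [Ldu_entry pf ph]
            apply Finset.sum_eq_zero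
            intro p hp
            rcases Finset.mem_product.1 hp with ⟨h1, h2⟩
            have hfa : f p.1 = 2 := mem_dir.1 h1
            have hv : p.2 ≠ 2 := fin3_mem01.1 h2
            have : eps (update f p.1 p.2) h = 0 := by
              apply eps_of_not
              intro c hcov
              rcases eq_or_ne c p.1 with rfl | hca
              · exact hne (funext fun b => by
                  rcases eq_or_ne b p.1 with hbe | hb
                  · rw [hbe]; exact hfa.trans hcov.1.symm
                  · exact ((update_of_ne hb p.2 f).symm.trans (hcov.2.2 b hb)))
              · have hfc : f c ≠ 2 := by
                  have := hcov.2.1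
                  rwa [update_of_ne hca] at this
                have hha' : h p.1 = p.2 := by
                  have h5 := hcov.2.2 p.1 hca.symm
                  rw [update_self] at h5
                  exact h5.symm
                exact hDM ⟨c, p.1, hca, hfc, hcov.1, hfa,
                  (fun e => hv (hha'.symm.trans e)),
                  fun b hb hbc => ((update_of_ne hbc p.2 f).symm.trans (hcov.2.2 b hb))⟩
            rw [this]
            simp
        rw [hud, hdu]
        norm_num

/-! ### Inner products, flips, and counting -/

def flipv : Fin 3 → Fin 3 := fun x => if x = 0 then 1 else 0

lemma flipv_ne2 : ∀ x : Fin 3, x ≠ 2 → flipv x ≠ 2 := by decide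
lemma flipv_ne : ∀ x : Fin 3, x ≠ 2 → flipv x ≠ x := by decide
lemma eq_flipv : ∀ x y : Fin 3, x ≠ 2 → y ≠ 2 → x ≠ y → y = flipv x := by decide
lemma flipv_flipv : ∀ x : Fin 3, x ≠ 2 → flipv (flipv x) = x := by decide

/-- The set of 1-coordinates. -/
def onesSet (f : Face n) : Finset (Fin n) := Finset.univ.filter fun c => f c = 1

def ones (f : Face n) : ℕ := (onesSet f).card

def inn (f h : Face n) : ℕ := (Finset.univ.filter fun c => f c = 1 ∧ h c = 1).card

lemma inn_comm (f h : Face n) : inn f h = inn h f := by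
  unfold inn
  congr 1
  ext c
  simp [and_comm]

lemma pow_erase (s : Finset (Fin n)) (c : Fin n) :
    ((-1 : ℝ)) ^ (s.erase c).card = (-1) ^ s.card * (if c ∈ s then -1 else 1) := by
  by_cases hc : c ∈ s
  · rw [if_pos hc]
    have h2 : s.card = (s.erase c).card + 1 := (Finset.card_erase_add_one hc).symm
    rw [h2, pow_succ]
    ring
  · rw [if_neg hc, Finset.erase_eq_of_notMem hc, mul_one]

lemma pow_inn_update (f h : Face n) (c : Fin n) (w : Fin 3) :
    ((-1 : ℝ)) ^ inn (update h c w) f =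
      (-1) ^ inn h f * (if w = 1 ∧ f c = 1 then -1 else 1) *
        (if h c = 1 ∧ f c = 1 then -1 else 1) := by
  unfold inn
  set s := Finset.univ.filter fun b => h b = 1 ∧ f b = 1 with hs
  have hmem : c ∈ s ↔ (h c = 1 ∧ f c = 1) := by simp [hs]
  have hset : (Finset.univ.filter fun b => update h c w b = 1 ∧ f b = 1) =
      if w = 1 ∧ f c = 1 then insert c (s.erase c) else s.erase c := by
    by_cases hw : w = 1 ∧ f c = 1
    · rw [if_pos hw]
      ext b
      rcases eq_or_ne b c with rfl | hb
      · simp [update_self, hw.1, hw.2]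
      · simp [update_of_ne hb, hb, hs]
    · rw [if_neg hw]
      ext b
      rcases eq_or_ne b c with rfl | hb
      · simp only [Finset.mem_filter, Finset.mem_univ, true_and, update_self,
          Finset.mem_erase, ne_eq, not_true_eq_false, false_and, iff_false]
        exact hw
      · simp [update_of_ne hb, hb, hs]
  rw [hset]
  by_cases hw : w = 1 ∧ f c = 1
  · rw [if_pos hw, if_pos hw, Finset.card_insert_of_notMem (Finset.notMem_erase c _),
      pow_succ, pow_erase]
    rw [if_congr hmem rfl rfl]
    split_ifs <;> ring
  · rw [if_neg hw, if_neg hw, pow_erase, if_congr hmem rfl rfl]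
    split_ifs <;> ring

lemma flip_factor (x z : Fin 3) (hx : x ≠ 2) :
    (if flipv x = 1 ∧ z = 1 then (-1 : ℝ) else 1) * (if x = 1 ∧ z = 1 then -1 else 1) =
      if z = 1 then -1 else 1 := by
  fin_cases x <;> fin_cases z <;> simp_all [flipv] <;> norm_num

lemma neq_factor (x y : Fin 3) (hx : x ≠ 2) (hy : y ≠ 2) (hxy : x ≠ y) :
    (if x = 1 then (-1 : ℝ) else 1) * (if y = 1 then -1 else 1) = -1 := by
  fin_cases x <;> fin_cases y <;> simp_all <;> norm_num

/-- Canonical face with star set `S` and ones set `T`. -/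
def Phi (S T : Finset (Fin n)) : Face n := fun c => if c ∈ S then 2 else if c ∈ T then 1 else 0

lemma dir_Phi (S T : Finset (Fin n)) : dir (Phi S T) = S := by
  ext c
  rw [mem_dir]
  unfold Phi
  by_cases hc : c ∈ S
  · simp [hc]
  · simp only [if_neg hc]
    by_cases ht : c ∈ T <;> simp [ht, hc]

lemma onesSet_Phi {S T : Finset (Fin n)} (hT : T ⊆ Sᶜ) : onesSet (Phi S T) = T := by
  ext c
  unfold onesSet Phi
  by_cases hc : c ∈ S
  · have : c ∉ T := fun h => by simpa [hc] using hT h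
    simp [hc, this]
  · by_cases ht : c ∈ T <;> simp [hc, ht]

lemma onesSet_subset_compl (y : Face n) : onesSet y ⊆ (dir y)ᶜ := by
  intro c hc
  rw [Finset.mem_compl, mem_dir]
  have h1 : y c = 1 := (Finset.mem_filter.1 hc).2
  rw [h1]
  decide

lemma Phi_eq {y : Face n} {S : Finset (Fin n)} (hS : dir y = S) : Phi S (onesSet y) = y := by
  funext c
  unfold Phi
  by_cases hc : c ∈ S
  · rw [if_pos hc, (mem_dir.1 (hS ▸ hc)).symm]
  · rw [if_neg hc]
    have hy2 : y c ≠ 2 := fun e => hc (hS ▸ mem_dir.2 e)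
    by_cases h1 : y c = 1
    · simp [onesSet, h1]
    · have h0 : ∀ x : Fin 3, x ≠ 2 → x ≠ 1 → x = 0 := by decide
      have hnot : c ∉ onesSet y := fun hmem => h1 (Finset.mem_filter.1 hmem).2
      rw [if_neg hnot, h0 _ hy2 h1]

lemma card_dir_eq (S : Finset (Fin n)) :
    (Finset.univ.filter fun y : Face n => dir y = S).card = 2 ^ (n - S.card) := by
  have hcompl : n - S.card = Sᶜ.card := by
    rw [Finset.card_compl, Fintype.card_fin]
  rw [hcompl, ← Finset.card_powerset]
  apply Finset.card_bij' (fun y _ => onesSet y) (fun T _ => Phi S T)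
  · intro y hy
    rw [Finset.mem_powerset]
    exact (Finset.mem_filter.1 hy).2 ▸ onesSet_subset_compl y
  · intro T hT
    exact Finset.mem_filter.2 ⟨Finset.mem_univ _, dir_Phi S T⟩
  · intro y hy
    exact Phi_eq (Finset.mem_filter.1 hy).2
  · intro T hT
    exact onesSet_Phi (Finset.mem_powerset.1 hT)

lemma card_ones_eq {k j : ℕ} :
    ((faceSet (Finset.univ : Finset (Face n)) k).filter fun g => ones g = j).card =
      n.choose k * (n - k).choose j := by
  have hcard : (((Finset.univ : Finset (Fin n)).powersetCard k).sigma
      fun S => Sᶜ.powersetCard j).card = n.choose k * (n - k).choose j := by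
    rw [Finset.card_sigma]
    rw [Finset.sum_congr rfl (fun S hS => ?_), Finset.sum_const,
      Finset.card_powersetCard, Finset.card_univ, Fintype.card_fin, smul_eq_mul]
    rw [Finset.card_powersetCard, Finset.card_compl, Fintype.card_fin,
      (Finset.mem_powersetCard.1 hS).2]
  rw [← hcard]
  apply Finset.card_bij' (fun g _ => (⟨dir g, onesSet g⟩ : Σ _ : Finset (Fin n), Finset (Fin n)))
    (fun p _ => Phi p.1 p.2)
  · intro g hg
    rw [Finset.mem_sigma]
    rcases Finset.mem_filter.1 hg with ⟨hg1, hg2⟩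
    constructor
    · exact Finset.mem_powersetCard.2 ⟨Finset.subset_univ _, mem_faceSet_univ.1 hg1⟩
    · exact Finset.mem_powersetCard.2 ⟨onesSet_subset_compl g, hg2⟩
  · intro p hp
    rcases Finset.mem_sigma.1 hp with ⟨hp1, hp2⟩
    apply Finset.mem_filter.2
    constructor
    · apply mem_faceSet_univ.2
      unfold fdim
      rw [dir_Phi, (Finset.mem_powersetCard.1 hp1).2]
    · unfold ones
      rw [onesSet_Phi (Finset.mem_powersetCard.1 hp2).1, (Finset.mem_powersetCard.1 hp2).2]
  · intro g hg
    exact Phi_eq rfl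
  · intro p hp
    rcases Finset.mem_sigma.1 hp with ⟨hp1, hp2⟩
    have h1 : dir (Phi p.1 p.2) = p.1 := dir_Phi _ _
    have h2 : onesSet (Phi p.1 p.2) = p.2 := onesSet_Phi (Finset.mem_powersetCard.1 hp2).1
    show (⟨dir (Phi p.1 p.2), onesSet (Phi p.1 p.2)⟩ :
      Σ _ : Finset (Fin n), Finset (Fin n)) = p
    rw [h1, h2]

/-! ### Eigenvector matrix -/

/-- The (symmetric) eigenvector matrix entries: a tensor product of Hadamard matrices
on each block of faces with a common direction set. -/
def Pval (f g : Face n) : ℝ := if dir f = dir g then (-1 : ℝ) ^ inn f g else 0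

lemma sum_Ltot_Pval {k : ℕ} (hk : k ≤ n) {f g : Face n}
    (pf : f ∈ faceSet (Finset.univ : Finset (Face n)) k)
    (pg : g ∈ faceSet (Finset.univ : Finset (Face n)) k) :
    ∑ x ∈ faceSet (Finset.univ : Finset (Face n)) k,
      (if f = x then ((n : ℝ) + k) else if ∃ a, SF f x a then -1 else 0) * Pval x g =
      Pval f g * ((2 * k + 2 * ones g : ℕ) : ℝ) := by
  classical
  have hf : fdim f = k := mem_faceSet_univ.1 pf
  have hgd : fdim g = k := mem_faceSet_univ.1 pg
  set F : Face n → ℝ := fun x =>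
    (if f = x then ((n : ℝ) + k) else if ∃ a, SF f x a then -1 else 0) * Pval x g with hF
  show ∑ x ∈ faceSet (Finset.univ : Finset (Face n)) k, F x = _
  rw [← Finset.add_sum_erase _ F pf]
  have hFf : F f = ((n : ℝ) + k) * Pval f g := by rw [hF]; simp
  set A := Finset.univ.filter (fun a => f a ≠ 2) with hA
  set u : Fin n → Face n := fun a => update f a (flipv (f a)) with hu
  have hune : ∀ a, f a ≠ 2 → u a ≠ f := by
    intro a hfa e
    have := congrFun e a
    rw [hu] at this
    simp only [update_self] at this
    exact flipv_ne _ hfa this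
  have hdiru : ∀ a, f a ≠ 2 → dir (u a) = dir f := by
    intro a hfa
    rw [hu]
    simp only
    rw [dir_update_ne2 f a (flipv_ne2 _ hfa),
      Finset.erase_eq_of_notMem (fun h => hfa (mem_dir.1 h))]
  have hmapsub : A.image u ⊆ (faceSet (Finset.univ : Finset (Face n)) k).erase f := by
    intro x hx
    rcases Finset.mem_image.1 hx with ⟨a, ha, rfl⟩
    have hfa : f a ≠ 2 := (Finset.mem_filter.1 ha).2
    refine Finset.mem_erase.2 ⟨hune a hfa, mem_faceSet_univ.2 ?_⟩
    unfold fdim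
    rw [hdiru a hfa]
    exact hf
  have hvan : ∀ x ∈ (faceSet (Finset.univ : Finset (Face n)) k).erase f,
      x ∉ A.image u → F x = 0 := by
    intro x hx hnx
    have hxf : x ≠ f := (Finset.mem_erase.1 hx).1
    rw [hF]
    simp only
    rw [if_neg (fun e => hxf e.symm), if_neg, zero_mul]
    rintro ⟨a, hsf⟩
    apply hnx
    refine Finset.mem_image.2 ⟨a, Finset.mem_filter.2 ⟨Finset.mem_univ _, hsf.1⟩, ?_⟩
    funext b
    rcases eq_or_ne b a with rfl | hb
    · rw [hu]
      simp only [update_self]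
      exact (eq_flipv (f b) (x b) hsf.1 hsf.2.1 (ne_at (Ne.symm hxf) hsf.2.2)).symm
    · rw [hu]
      simp only
      rw [update_of_ne hb]
      exact hsf.2.2 b hb
  have hinj : Set.InjOn u ↑A := by
    intro a ha a' ha' heq
    by_contra hne
    have hfa : f a ≠ 2 := (Finset.mem_filter.1 (Finset.mem_coe.1 ha)).2
    have := congrFun heq a
    rw [hu] at this
    simp only [update_self] at this
    rw [update_of_ne hne] at this
    exact flipv_ne _ hfa this
  have hterm : ∀ a ∈ A, F (u a) = -Pval (u a) g := by
    intro a ha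
    have hfa : f a ≠ 2 := (Finset.mem_filter.1 ha).2
    rw [hF]
    simp only
    rw [if_neg (fun e => hune a hfa e.symm), if_pos, neg_one_mul]
    refine ⟨a, hfa, ?_, fun b hb => (by rw [hu]; simp only; rw [update_of_ne hb])⟩
    rw [hu]
    simp only [update_self]
    exact flipv_ne2 _ hfa
  have hsum2 : ∑ x ∈ (faceSet (Finset.univ : Finset (Face n)) k).erase f, F x =
      -∑ a ∈ A, Pval (u a) g := by
    rw [← Finset.sum_subset hmapsub hvan, Finset.sum_image hinj,
      Finset.sum_congr rfl hterm, Finset.sum_neg_distrib]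
  rw [hFf, hsum2]
  by_cases hdir : dir f = dir g
  · have hPfg : Pval f g = (-1 : ℝ) ^ inn f g := if_pos hdir
    have hPu : ∀ a ∈ A, Pval (u a) g =
        (-1 : ℝ) ^ inn f g * (if g a = 1 then (-1 : ℝ) else 1) := by
      intro a ha
      have hfa : f a ≠ 2 := (Finset.mem_filter.1 ha).2
      have hda : dir (u a) = dir g := (hdiru a hfa).trans hdir
      rw [Pval, if_pos hda, hu]
      simp only
      rw [pow_inn_update g f a (flipv (f a)), mul_assoc, flip_factor (f a) (g a) hfa]
    rw [Finset.sum_congr rfl hPu, ← Finset.mul_sum]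
    have hAg : A = Finset.univ.filter (fun a => g a ≠ 2) := by
      rw [hA]
      apply Finset.filter_congr
      intro a _
      have : f a = 2 ↔ g a = 2 := by rw [← mem_dir, ← mem_dir, hdir]
      simp only [ne_eq]
      exact not_congr this
    have hone : ((Finset.univ.filter fun a => g a ≠ 2).filter fun a => g a = 1) =
        onesSet g := by
      rw [Finset.filter_filter]
      apply Finset.filter_congr
      intro a _
      constructor
      · exact fun h => h.2
      · intro h
        refine ⟨?_, h⟩
        rw [h]
        decide
    have hsplitc :
        ((Finset.univ.filter fun a => g a ≠ 2).filter fun a => g a = 1).card +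
        ((Finset.univ.filter fun a => g a ≠ 2).filter fun a => ¬ g a = 1).card = n - k := by
      rw [Finset.card_filter_add_card_filter_not, card_ne2 hgd]
    rw [hAg, Finset.sum_ite, Finset.sum_const, Finset.sum_const, hone, hPfg]
    set c0 := ((Finset.univ.filter fun a => g a ≠ 2).filter fun a => ¬ g a = 1).card with hc0
    rw [hone] at hsplitc
    have hoc : ones g = (onesSet g).card := rfl
    rw [← hoc] at hsplitc
    set v := (-1 : ℝ) ^ inn f g with hv
    have hones : ((ones g : ℕ) : ℝ) + ((c0 : ℕ) : ℝ) = (n : ℝ) - (k : ℝ) := by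
      have h9 : ((ones g + c0 : ℕ) : ℝ) = ((n - k : ℕ) : ℝ) := by rw [hsplitc]
      push_cast [Nat.cast_sub hk] at h9
      linarith
    simp only [nsmul_eq_mul, mul_one, mul_neg_one]
    push_cast
    rw [← hoc]
    linear_combination (-v) * hones
  · have hPfg : Pval f g = 0 := if_neg hdir
    have hPu : ∀ a ∈ A, Pval (u a) g = 0 := by
      intro a ha
      have hfa : f a ≠ 2 := (Finset.mem_filter.1 ha).2
      exact if_neg (fun e => hdir ((hdiru a hfa).symm.trans e))
    rw [Finset.sum_congr rfl hPu, Finset.sum_const, hPfg]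
    simp

lemma sum_Pval_Pval {k : ℕ} {f g : Face n}
    (pf : f ∈ faceSet (Finset.univ : Finset (Face n)) k)
    (pg : g ∈ faceSet (Finset.univ : Finset (Face n)) k) :
    ∑ x ∈ faceSet (Finset.univ : Finset (Face n)) k, Pval f x * Pval x g =
      if f = g then (2 : ℝ) ^ (n - k) else 0 := by
  classical
  have hf : fdim f = k := mem_faceSet_univ.1 pf
  have hgd : fdim g = k := mem_faceSet_univ.1 pg
  rcases eq_or_ne f g with rfl | hne
  · rw [if_pos rfl]
    have hterm : ∀ x ∈ faceSet (Finset.univ : Finset (Face n)) k,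
        Pval f x * Pval x f = if dir f = dir x then (1 : ℝ) else 0 := by
      intro x _
      unfold Pval
      by_cases hd : dir f = dir x
      · rw [if_pos hd, if_pos hd.symm, if_pos hd, inn_comm x f, ← pow_add]
        exact Even.neg_one_pow (Even.add_self _)
      · rw [if_neg hd, if_neg hd, zero_mul]
    rw [Finset.sum_congr rfl hterm, Finset.sum_boole]
    have hset : (faceSet (Finset.univ : Finset (Face n)) k).filter (fun x => dir f = dir x) =
        Finset.univ.filter (fun y : Face n => dir y = dir f) := by
      ext x
      simp only [faceSet, Finset.filter_filter, Finset.mem_filter, Finset.mem_univ, true_and]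
      constructor
      · rintro ⟨_, h2⟩; exact h2.symm
      · intro h1
        exact ⟨by rw [fdim, h1]; exact hf, h1.symm⟩
    rw [hset, card_dir_eq (dir f)]
    have : (dir f).card = k := hf
    rw [this]
    norm_num
  · rw [if_neg hne]
    by_cases hdir : dir f = dir g
    · obtain ⟨c0, hc0⟩ : ∃ c0, f c0 ≠ g c0 := Function.ne_iff.1 hne
      have hfc0 : f c0 ≠ 2 := fun e =>
        hc0 (e.trans (mem_dir.1 (hdir ▸ mem_dir.2 e)).symm)
      have hgc0 : g c0 ≠ 2 := fun e =>
        hc0 ((mem_dir.1 (hdir.symm ▸ mem_dir.2 e)).trans e.symm)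
      apply Finset.sum_involution
        (fun x _ => if dir x = dir f then update x c0 (flipv (x c0)) else x)
      · -- sums of paired terms vanish
        intro x hx
        by_cases hd : dir x = dir f
        · simp only [if_pos hd]
          have hxc0 : x c0 ≠ 2 := fun e => hfc0 (mem_dir.1 (hd ▸ mem_dir.2 e))
          have hdx : dir (update x c0 (flipv (x c0))) = dir x := by
            rw [dir_update_ne2 x c0 (flipv_ne2 _ hxc0),
              Finset.erase_eq_of_notMem (fun h => hxc0 (mem_dir.1 h))]
          have e1 : Pval f x * Pval x g = (-1 : ℝ) ^ (inn x f + inn x g) := by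
            rw [Pval, Pval, if_pos hd.symm, if_pos (hd.trans hdir), inn_comm f x, pow_add]
          have e2 : Pval f (update x c0 (flipv (x c0))) *
              Pval (update x c0 (flipv (x c0))) g = -((-1 : ℝ) ^ (inn x f + inn x g)) := by
            rw [Pval, Pval, if_pos (hd.symm.trans hdx.symm), if_pos (hdx.trans (hd.trans hdir)),
              inn_comm f _, pow_inn_update f x c0 (flipv (x c0)),
              pow_inn_update g x c0 (flipv (x c0))]
            have hA := flip_factor (x c0) (f c0) hxc0
            have hB := flip_factor (x c0) (g c0) hxc0
            have hC := neq_factor (f c0) (g c0) hfc0 hgc0 hc0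
            have hre : ((-1 : ℝ) ^ inn x f *
                (if flipv (x c0) = 1 ∧ f c0 = 1 then (-1:ℝ) else 1) *
                (if x c0 = 1 ∧ f c0 = 1 then (-1:ℝ) else 1)) *
                ((-1 : ℝ) ^ inn x g *
                (if flipv (x c0) = 1 ∧ g c0 = 1 then (-1:ℝ) else 1) *
                (if x c0 = 1 ∧ g c0 = 1 then (-1:ℝ) else 1)) =
                ((-1 : ℝ) ^ inn x f * (-1 : ℝ) ^ inn x g) *
                (((if flipv (x c0) = 1 ∧ f c0 = 1 then (-1:ℝ) else 1) *
                  (if x c0 = 1 ∧ f c0 = 1 then (-1:ℝ) else 1)) *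
                 ((if flipv (x c0) = 1 ∧ g c0 = 1 then (-1:ℝ) else 1) *
                  (if x c0 = 1 ∧ g c0 = 1 then (-1:ℝ) else 1))) := by ring
            rw [hre, hA, hB, hC, pow_add]
            ring
          rw [e1, e2]
          ring
        · simp only [if_neg hd]
          have h0 : Pval f x = 0 := if_neg (fun e => hd e.symm)
          rw [h0, zero_mul]
          norm_num
      · intro x hx hne0
        have hd : dir x = dir f := by
          by_contra hd
          exact hne0 (by rw [Pval, if_neg (fun e => hd e.symm), zero_mul])
        simp only [if_pos hd]
        intro e
        have hxc0 : x c0 ≠ 2 := fun e2 => hfc0 (mem_dir.1 (hd ▸ mem_dir.2 e2))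
        have := congrFun e c0
        rw [update_self] at this
        exact flipv_ne _ hxc0 this
      · intro x hx
        by_cases hd : dir x = dir f
        · simp only [if_pos hd]
          have hxc0 : x c0 ≠ 2 := fun e => hfc0 (mem_dir.1 (hd ▸ mem_dir.2 e))
          apply mem_faceSet_univ.2
          unfold fdim
          rw [dir_update_ne2 x c0 (flipv_ne2 _ hxc0),
            Finset.erase_eq_of_notMem (fun h => hxc0 (mem_dir.1 h))]
          exact mem_faceSet_univ.1 hx
        · simp only [if_neg hd]
          exact hx
      · intro x hx
        by_cases hd : dir x = dir f
        · have hxc0 : x c0 ≠ 2 := fun e => hfc0 (mem_dir.1 (hd ▸ mem_dir.2 e))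
          have hdx : dir (update x c0 (flipv (x c0))) = dir x := by
            rw [dir_update_ne2 x c0 (flipv_ne2 _ hxc0),
              Finset.erase_eq_of_notMem (fun h => hxc0 (mem_dir.1 h))]
          simp only [if_pos hd, if_pos (hdx.trans hd)]
          rw [update_self, Function.update_idem, flipv_flipv _ hxc0, Function.update_eq_self]
        · simp only [if_neg hd]
    · apply Finset.sum_eq_zero
      intro x _
      by_cases hd : dir f = dir x
      · have h0 : Pval x g = 0 := if_neg (fun e => hdir (hd.trans e))
        rw [h0, mul_zero]
      · rw [Pval, if_neg hd, zero_mul]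

/-! ### Characteristic polynomial tools -/

section CharpolyTools

open Polynomial

variable {m : Type*} [Fintype m] [DecidableEq m]

lemma charpoly_similar (A P Q : Matrix m m ℝ) (hPQ : P * Q = 1) :
    (P * A * Q).charpoly = A.charpoly := by
  have hc : Commute (Matrix.scalar m (X : ℝ[X]))
      ((Polynomial.C : ℝ →+* ℝ[X]).mapMatrix P) :=
    Matrix.scalar_commute _ (fun r' => Commute.all _ _) _
  have h1 : Matrix.charmatrix (P * A * Q) =
      (Polynomial.C : ℝ →+* ℝ[X]).mapMatrix P * Matrix.charmatrix A *
        (Polynomial.C : ℝ →+* ℝ[X]).mapMatrix Q := by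
    unfold Matrix.charmatrix
    rw [_root_.map_mul, _root_.map_mul, Matrix.mul_sub, Matrix.sub_mul]
    congr 1
    rw [← hc.eq, mul_assoc, ← _root_.map_mul, hPQ, _root_.map_one, mul_one]
  rw [Matrix.charpoly, Matrix.charpoly, h1, Matrix.det_mul, Matrix.det_mul]
  have h2 : ((Polynomial.C : ℝ →+* ℝ[X]).mapMatrix P).det *
      ((Polynomial.C : ℝ →+* ℝ[X]).mapMatrix Q).det = 1 := by
    rw [← Matrix.det_mul, ← _root_.map_mul, hPQ, _root_.map_one, Matrix.det_one]
  linear_combination (Matrix.charmatrix A).det * h2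

lemma charpoly_diagonal_real (d : m → ℝ) :
    (Matrix.diagonal d).charpoly = ∏ i, (X - C (d i)) := by
  rw [Matrix.charpoly]
  have h1 : Matrix.charmatrix (Matrix.diagonal d) =
      Matrix.diagonal (fun i => (X : ℝ[X]) - C (d i)) := by
    ext i j
    rcases eq_or_ne i j with rfl | hij
    · rw [Matrix.charmatrix_apply_eq, Matrix.diagonal_apply_eq, Matrix.diagonal_apply_eq]
    · rw [Matrix.charmatrix_apply_ne _ _ _ hij, Matrix.diagonal_apply_ne _ hij,
        Matrix.diagonal_apply_ne _ hij, map_zero, neg_zero]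
  rw [h1, Matrix.det_diagonal]

end CharpolyTools

end Aux

/-- **Total Laplacian spectra of cubes** (Duval–Klivans–Martin, Thm. 3.4, first
formula).  For `n ≥ 1` and `0 ≤ k ≤ n`, the characteristic polynomial of the total
Laplacian `L^tot_k` of the full cube `Q_n` equals
`∏_{i=0}^{n-k} (y - (2k + 2i))^{binom(n,k)·binom(n-k,i)}`.  In particular all
eigenvalues are even integers, so cubes and their skeletons are Laplacian integral. -/
theorem cube_total_spectrum (n k : ℕ) (hn : 1 ≤ n) (hk : k ≤ n) :
    (Ltot (Finset.univ : Finset (Face n)) k).charpoly =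
      ∏ i ∈ Finset.range (n - k + 1),
        (Polynomial.X - Polynomial.C ((2 * k + 2 * i : ℕ) : ℝ)) ^
          (n.choose k * (n - k).choose i) := by
  classical
  let P : Matrix {f // f ∈ faceSet (Finset.univ : Finset (Face n)) k}
      {f // f ∈ faceSet (Finset.univ : Finset (Face n)) k} ℝ :=
    Matrix.of fun f g => Pval f.1 g.1
  let d : {f // f ∈ faceSet (Finset.univ : Finset (Face n)) k} → ℝ :=
    fun g => ((2 * k + 2 * ones g.1 : ℕ) : ℝ)
  have hcomm : Ltot (Finset.univ : Finset (Face n)) k * P = P * Matrix.diagonal d := by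
    ext f g
    rw [Matrix.mul_apply, Matrix.mul_diagonal]
    have hstep : ∀ h : {f // f ∈ faceSet (Finset.univ : Finset (Face n)) k},
        Ltot (Finset.univ : Finset (Face n)) k f h * P h g =
        (if f.1 = h.1 then ((n : ℝ) + k) else if ∃ a, SF f.1 h.1 a then -1 else 0) *
          Pval h.1 g.1 := by
      intro h
      congr 1
      obtain ⟨f, pf⟩ := f
      obtain ⟨h, ph⟩ := h
      exact Ltot_entry hk pf ph
    rw [Finset.sum_congr rfl (fun h _ => hstep h),
      Finset.sum_coe_sort (faceSet (Finset.univ : Finset (Face n)) k)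
        (fun x => (if f.1 = x then ((n : ℝ) + k) else if ∃ a, SF f.1 x a then -1 else 0) *
          Pval x g.1)]
    exact sum_Ltot_Pval hk f.2 g.2
  have hPP : P * P = ((2 : ℝ) ^ (n - k)) •
      (1 : Matrix {f // f ∈ faceSet (Finset.univ : Finset (Face n)) k}
        {f // f ∈ faceSet (Finset.univ : Finset (Face n)) k} ℝ) := by
    ext f g
    rw [Matrix.mul_apply, Matrix.smul_apply, Matrix.one_apply]
    rw [show (∑ h : {f // f ∈ faceSet (Finset.univ : Finset (Face n)) k},
        P f h * P h g) = ∑ x ∈ faceSet (Finset.univ : Finset (Face n)) k,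
        Pval f.1 x * Pval x g.1 from
      Finset.sum_coe_sort (faceSet (Finset.univ : Finset (Face n)) k)
        (fun x => Pval f.1 x * Pval x g.1)]
    rw [sum_Pval_Pval f.2 g.2]
    by_cases he : f = g
    · rw [if_pos (Subtype.ext_iff.1 he), if_pos he, smul_eq_mul, mul_one]
    · rw [if_neg (fun e => he (Subtype.ext e)), if_neg he, smul_eq_mul, mul_zero]
  have hne0 : ((2 : ℝ) ^ (n - k)) ≠ 0 := by positivity
  have hPQ : P * ((((2 : ℝ) ^ (n - k))⁻¹) • P) = 1 := by
    rw [Matrix.mul_smul, hPP, smul_smul, inv_mul_cancel₀ hne0, one_smul]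
  have hA : Ltot (Finset.univ : Finset (Face n)) k =
      P * Matrix.diagonal d * ((((2 : ℝ) ^ (n - k))⁻¹) • P) := by
    calc Ltot (Finset.univ : Finset (Face n)) k
        = Ltot (Finset.univ : Finset (Face n)) k *
            (P * ((((2 : ℝ) ^ (n - k))⁻¹) • P)) := by rw [hPQ, mul_one]
      _ = (Ltot (Finset.univ : Finset (Face n)) k * P) *
            ((((2 : ℝ) ^ (n - k))⁻¹) • P) := by rw [mul_assoc]
      _ = P * Matrix.diagonal d * ((((2 : ℝ) ^ (n - k))⁻¹) • P) := by rw [hcomm]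
  rw [hA, charpoly_similar (Matrix.diagonal d) P _ hPQ, charpoly_diagonal_real]
  rw [show (∏ g : {f // f ∈ faceSet (Finset.univ : Finset (Face n)) k},
      (Polynomial.X - Polynomial.C (d g))) =
      ∏ x ∈ faceSet (Finset.univ : Finset (Face n)) k,
        (Polynomial.X - Polynomial.C ((2 * k + 2 * ones x : ℕ) : ℝ)) from
    Finset.prod_coe_sort (faceSet (Finset.univ : Finset (Face n)) k)
      (fun x => Polynomial.X - Polynomial.C ((2 * k + 2 * ones x : ℕ) : ℝ))]
  have hmaps : ∀ x ∈ faceSet (Finset.univ : Finset (Face n)) k,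
      ones x ∈ Finset.range (n - k + 1) := by
    intro x hx
    rw [Finset.mem_range]
    have hsub : onesSet x ⊆ Finset.univ.filter (fun a => x a ≠ 2) := by
      intro c hc
      have h1 : x c = 1 := (Finset.mem_filter.1 hc).2
      refine Finset.mem_filter.2 ⟨Finset.mem_univ _, ?_⟩
      rw [h1]
      decide
    have hle := Finset.card_le_card hsub
    rw [card_ne2 (mem_faceSet_univ.1 hx)] at hle
    exact Nat.lt_succ_of_le hle
  rw [← Finset.prod_fiberwise_of_maps_to hmaps
    (fun x => Polynomial.X - Polynomial.C ((2 * k + 2 * ones x : ℕ) : ℝ))]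
  apply Finset.prod_congr rfl
  intro j hj
  rw [Finset.prod_congr rfl (fun x hx => by rw [(Finset.mem_filter.1 hx).2]),
    Finset.prod_const, card_ones_eq]

end CubicalPaper
end
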